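/- arXiv:1705.04735 — 3 statements merged into one kernel-verified Lean document; each statement's English description precedes it below -/
import Mathlib

section
/- Let G be a graph with γ_t(G) = 2·γ(G) such that there exists a minimum dominating set D of G (a γ(G)-set) in which every vertex of D is adjacent to a vertex of degree one. Then for any graph H with γ(H) ≥ 4, γ_r(G∘H) = 4·γ(G). -/
open Finset
open scoped Classical

/-- The lexicographic product of two simple graphs. -/
def lexProd {α β : Type*} (G : SimpleGraph α) (H : SimpleGraph β) :
    SimpleGraph (α × β) where
  Adj p q := G.Adj p.1 q.1 ∨ (p.1 = q.1 ∧ H.Adj p.2 q.2)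
  symm := by
    constructor
    rintro ⟨a, b⟩ ⟨c, d⟩ (h | ⟨h1, h2⟩)
    · exact Or.inl h.symm
    · exact Or.inr ⟨h1.symm, h2.symm⟩
  loopless := by
    constructor
    rintro ⟨a, b⟩ (h | ⟨h1, h2⟩)
    · exact G.loopless.irrefl a h
    · exact H.loopless.irrefl b h2

/-- A vertex `w` is undefended with respect to `g` if `g w = 0` and `g x = 0`
for every neighbour `x` of `w`. -/
def Undefended {α : Type*} (G : SimpleGraph α) (g : α → ℕ) (w : α) : Prop :=
  g w = 0 ∧ ∀ x, G.Adj w x → g x = 0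

/-- A weak Roman dominating function. -/
def IsWRDF {α : Type*} (G : SimpleGraph α) (f : α → ℕ) : Prop :=
  (∀ v, f v ≤ 2) ∧
    ∀ v, f v = 0 → ∃ u, G.Adj u v ∧ 1 ≤ f u ∧
      ∀ w, ¬ Undefended G (Function.update (Function.update f v 1) u (f u - 1)) w

/-- The weak Roman domination number. -/
noncomputable def weakRomanNumber {α : Type*} (G : SimpleGraph α) [Fintype α] : ℕ :=
  sInf {k | ∃ f : α → ℕ, IsWRDF G f ∧ ∑ v, f v = k}

/-- A dominating set. -/
def IsDomSet {α : Type*} (G : SimpleGraph α) (D : Finset α) : Prop :=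
  ∀ v ∉ D, ∃ u ∈ D, G.Adj u v

/-- The domination number. -/
noncomputable def domNumber {α : Type*} (G : SimpleGraph α) [Fintype α] : ℕ :=
  sInf {k | ∃ D : Finset α, IsDomSet G D ∧ D.card = k}

/-- A total dominating set. -/
def IsTotalDomSet {α : Type*} (G : SimpleGraph α) (S : Finset α) : Prop :=
  ∀ v, ∃ u ∈ S, G.Adj u v

/-- The total domination number. -/
noncomputable def totalDomNumber {α : Type*} (G : SimpleGraph α) [Fintype α] : ℕ :=
  sInf {k | ∃ S : Finset α, IsTotalDomSet G S ∧ S.card = k}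

/-- A double total dominating set: every vertex has at least two neighbours in `S`. -/
def IsDoubleTotalDomSet {α : Type*} (G : SimpleGraph α) (S : Finset α) : Prop :=
  ∀ v, ∃ u₁ ∈ S, ∃ u₂ ∈ S, u₁ ≠ u₂ ∧ G.Adj u₁ v ∧ G.Adj u₂ v

/-- The double total domination number. -/
noncomputable def doubleTotalDomNumber {α : Type*} (G : SimpleGraph α) [Fintype α] : ℕ :=
  sInf {k | ∃ S : Finset α, IsDoubleTotalDomSet G S ∧ S.card = k}

/-- A 2-packing: the closed neighbourhoods of distinct members are disjoint. -/
def IsTwoPacking {α : Type*} (G : SimpleGraph α) (X : Finset α) : Prop :=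
  ∀ u ∈ X, ∀ v ∈ X, u ≠ v →
    ∀ w, ¬ ((w = u ∨ G.Adj u w) ∧ (w = v ∨ G.Adj v w))

/-- The 2-packing number. -/
noncomputable def twoPackingNumber {α : Type*} (G : SimpleGraph α) [Fintype α] : ℕ :=
  sSup {k | ∃ X : Finset α, IsTwoPacking G X ∧ X.card = k}

/-- A secure dominating set. -/
def IsSecureDomSet {α : Type*} (G : SimpleGraph α) (S : Finset α) : Prop :=
  IsDomSet G S ∧ ∀ v ∉ S, ∃ u ∈ S, G.Adj u v ∧ IsDomSet G (insert v (S.erase u))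

/-- The secure domination number. -/
noncomputable def secureDomNumber {α : Type*} (G : SimpleGraph α) [Fintype α] : ℕ :=
  sInf {k | ∃ S : Finset α, IsSecureDomSet G S ∧ S.card = k}

/-- The corona product of two graphs. -/
def corona {α β : Type*} (G₁ : SimpleGraph α) (G₂ : SimpleGraph β) :
    SimpleGraph (α ⊕ α × β) where
  Adj x y :=
    match x, y with
    | .inl a, .inl a' => G₁.Adj a a'
    | .inl a, .inr p => a = p.1
    | .inr p, .inl a => p.1 = a
    | .inr p, .inr q => p.1 = q.1 ∧ G₂.Adj p.2 q.2
  symm := by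
    constructor
    rintro (a | p) (a' | q) h
    · exact G₁.symm.symm _ _ h
    · exact h.symm
    · exact h.symm
    · exact ⟨h.1.symm, G₂.symm.symm _ _ h.2⟩
  loopless := by
    constructor
    rintro (a | p) h
    · exact G₁.loopless.irrefl a h
    · exact G₂.loopless.irrefl p.2 h.2


lemma lexProd_adj {α β : Type*} (G : SimpleGraph α) (H : SimpleGraph β) (p q : α × β) :
    (lexProd G H).Adj p q ↔ G.Adj p.1 q.1 ∨ (p.1 = q.1 ∧ H.Adj p.2 q.2) := Iff.rfl

lemma pair_le_sum {α β : Type*} [Fintype β] (f : α × β → ℕ) (T : Finset α)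
    {p q : α × β} (hp : p.1 ∈ T) (hq : q.1 ∈ T) (hne : p ≠ q) :
    f p + f q ≤ ∑ x ∈ T, ∑ b, f (x, b) := by
  obtain ⟨xp, bp⟩ := p
  obtain ⟨xq, bq⟩ := q
  simp only at hp hq
  by_cases hx : xp = xq
  · subst hx
    have hb : bp ≠ bq := by rintro rfl; exact hne rfl
    have h1 : f (xp, bp) + f (xp, bq) ≤ ∑ b, f (xp, b) := by
      have h0 := Finset.sum_pair (f := fun b => f (xp, b)) hb
      calc f (xp, bp) + f (xp, bq) = ∑ b ∈ ({bp, bq} : Finset β), f (xp, b) := h0.symm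
        _ ≤ ∑ b, f (xp, b) :=
          Finset.sum_le_sum_of_subset (Finset.subset_univ _)
    exact h1.trans (Finset.single_le_sum (f := fun x => ∑ b, f (x, b))
      (fun x _ => Nat.zero_le _) hp)
  · have h1 : f (xp, bp) ≤ ∑ b, f (xp, b) :=
      Finset.single_le_sum (f := fun b => f (xp, b)) (fun b _ => Nat.zero_le _) (Finset.mem_univ _)
    have h2 : f (xq, bq) ≤ ∑ b, f (xq, b) :=
      Finset.single_le_sum (f := fun b => f (xq, b)) (fun b _ => Nat.zero_le _) (Finset.mem_univ _)
    have h3 : (∑ b, f (xp, b)) + (∑ b, f (xq, b)) ≤ ∑ x ∈ T, ∑ b, f (x, b) := by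
      have h0 := Finset.sum_pair (f := fun x => ∑ b, f (x, b)) hx
      calc (∑ b, f (xp, b)) + (∑ b, f (xq, b))
          = ∑ x ∈ ({xp, xq} : Finset α), ∑ b, f (x, b) := h0.symm
        _ ≤ ∑ x ∈ T, ∑ b, f (x, b) := Finset.sum_le_sum_of_subset
            (Finset.insert_subset hp (Finset.singleton_subset_iff.2 hq))
    omega

lemma upd2_ne {γ : Type*} {inst : DecidableEq γ} (f : γ → ℕ) (v u : γ) (n k : ℕ) (p : γ)
    (hpu : p ≠ u) (hpv : p ≠ v) :
    @Function.update γ (fun _ => ℕ) inst (@Function.update γ (fun _ => ℕ) inst f v n) u k p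
      = f p := by
  simp [Function.update, hpu, hpv]

lemma upd2_same {γ : Type*} {inst : DecidableEq γ} (f : γ → ℕ) (v u : γ) (n k : ℕ) :
    @Function.update γ (fun _ => ℕ) inst (@Function.update γ (fun _ => ℕ) inst f v n) u k u
      = k := by
  simp [Function.update]

lemma ball_ge_four {α β : Type*} [Fintype α] [Fintype β]
    (G : SimpleGraph α) (H : SimpleGraph β) (f : α × β → ℕ)
    (hf : IsWRDF (lexProd G H) f)
    (hfree : ∀ B : Finset β, B.card ≤ 3 → ∃ b, b ∉ B ∧ ∀ y ∈ B, ¬ H.Adj y b)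
    (a ℓ : α) (hadj : G.Adj a ℓ) (hpend : ∀ z, G.Adj ℓ z ↔ z = a) :
    4 ≤ ∑ x ∈ insert a (G.neighborFinset a), ∑ b, f (x, b) := by
  by_contra hlt
  push_neg at hlt
  set s : α → ℕ := fun x => ∑ b, f (x, b) with hs
  set supp : α → Finset β := fun x => Finset.univ.filter (fun b => f (x, b) ≠ 0) with hsuppdef
  have hsupp_card : ∀ x, (supp x).card ≤ s x := by
    intro x
    calc (supp x).card = ∑ _b ∈ supp x, 1 := by rw [Finset.card_eq_sum_ones]
      _ ≤ ∑ b ∈ supp x, f (x, b) := Finset.sum_le_sum (by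
          intro b hb
          simp only [hsuppdef, Finset.mem_filter] at hb
          omega)
      _ ≤ ∑ b, f (x, b) := Finset.sum_le_sum_of_subset (Finset.filter_subset _ _)
  have hpick : ∀ (x : α) (E : Finset β), (supp x ∪ E).card ≤ 3 →
      ∃ b, f (x, b) = 0 ∧ b ∉ E ∧ (∀ y, H.Adj y b → f (x, y) = 0) ∧ ∀ y ∈ E, ¬ H.Adj y b := by
    intro x E hE
    obtain ⟨b, hbB, hbadj⟩ := hfree _ hE
    refine ⟨b, ?_, ?_, ?_, ?_⟩
    · by_contra h0
      exact hbB (Finset.mem_union_left _ (by simp [hsuppdef, h0]))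
    · exact fun h => hbB (Finset.mem_union_right _ h)
    · intro y hy
      by_contra h0
      exact hbadj y (Finset.mem_union_left _ (by simp [hsuppdef, h0])) hy
    · exact fun y hyE => hbadj y (Finset.mem_union_right _ hyE)
  have ha_nbr : a ∉ G.neighborFinset a := by simp
  set σ := ∑ x ∈ insert a (G.neighborFinset a), s x with hσ
  have hσ3 : σ ≤ 3 := by omega
  set m := ∑ x ∈ G.neighborFinset a, s x with hm
  have hsplit : σ = s a + m := Finset.sum_insert ha_nbr
  have hℓnbr : ℓ ∈ G.neighborFinset a := G.mem_neighborFinset a ℓ |>.2 hadj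
  have hslℓ : s ℓ ≤ m :=
    Finset.single_le_sum (f := s) (fun x _ => Nat.zero_le _) hℓnbr
  have hne_aℓ : a ≠ ℓ := G.ne_of_adj hadj
  have hsa_le : s a ≤ σ :=
    Finset.single_le_sum (f := s) (fun x _ => Nat.zero_le _) (Finset.mem_insert_self _ _)
  -- Step A : the ℓ-column forces s a ≥ 1
  obtain ⟨b, hb0, -, hbcol, -⟩ := hpick ℓ ∅ (by
    rw [Finset.union_empty]
    exact (hsupp_card ℓ).trans (by omega))
  obtain ⟨u, huadj, hu1, hudef⟩ := hf.2 (ℓ, b) hb0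
  have hu_col : u.1 = a := by
    rcases huadj with h | ⟨h1, h2⟩
    · exact (hpend u.1).1 (G.adj_symm h)
    · exfalso
      have h3 : f u = 0 := by
        have h4 : f (u.1, u.2) = 0 := by
          rw [h1]; exact hbcol u.2 h2
        exact h4
      omega
  have hfu_sa : f u ≤ s a := by
    have h3 : f u ≤ s u.1 :=
      Finset.single_le_sum (f := fun b => f (u.1, b)) (fun b _ => Nat.zero_le _)
        (Finset.mem_univ u.2)
    have h4 : s u.1 = s a := congrArg s hu_col
    omega
  have hsa1 : 1 ≤ s a := le_trans hu1 hfu_sa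
  -- Step B : the a-column forces m ≥ 2
  obtain ⟨z, hz0, -, hzcol, -⟩ := hpick a ∅ (by
    rw [Finset.union_empty]
    exact (hsupp_card a).trans (by omega))
  obtain ⟨u', hu'adj, hu'1, hu'def⟩ := hf.2 (a, z) hz0
  have hu'_cross : G.Adj u'.1 a := by
    rcases hu'adj with h | ⟨h1, h2⟩
    · exact h
    · exfalso
      have h3 : f u' = 0 := by
        have h4 : f (u'.1, u'.2) = 0 := by
          rw [h1]; exact hzcol u'.2 h2
        exact h4
      omega
  have hu'nbr : u'.1 ∈ G.neighborFinset a := (G.mem_neighborFinset a u'.1).2 (G.adj_symm hu'_cross)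
  have hfu'_m : f u' ≤ m := by
    have h1 : f u' ≤ s u'.1 :=
      Finset.single_le_sum (f := fun b => f (u'.1, b)) (fun b _ => Nat.zero_le _)
        (Finset.mem_univ u'.2)
    exact h1.trans (Finset.single_le_sum (f := s) (fun x _ => Nat.zero_le _) hu'nbr)
  have hm1 : 1 ≤ m := le_trans hu'1 hfu'_m
  have hsa2 : s a ≤ 2 := by omega
  obtain ⟨z', hz'0, hz'ne, hz'col, hz'z⟩ := hpick a {z} (by
    have h1 : (supp a ∪ {z}).card ≤ (supp a).card + 1 := by
      refine le_trans (Finset.card_union_le _ _) ?_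
      simp
    have := hsupp_card a
    omega)
  have hz'z2 : ¬ H.Adj z z' := hz'z z (Finset.mem_singleton_self z)
  have hz'nez : z' ≠ z := by
    intro h; exact hz'ne (by simp [h])
  have hu'1ne_a : u'.1 ≠ a := G.ne_of_adj hu'_cross
  have hm2 : 2 ≤ m := by
    by_contra hmlt
    push_neg at hmlt
    apply hu'def (a, z')
    constructor
    · rw [upd2_ne]
      · exact hz'0
      · intro h; exact hu'1ne_a (congrArg Prod.fst h).symm
      · intro h
        exact hz'nez (congrArg Prod.snd h)
    · intro p hp
      rcases hp with h | ⟨h1, h2⟩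
      · -- cross neighbour : p.1 is a neighbour of a
        have h' : G.Adj a p.1 := h
        have hpnbr : p.1 ∈ G.neighborFinset a := (G.mem_neighborFinset a p.1).2 h'
        have hp1ne_a : p.1 ≠ a := fun hh => (G.ne_of_adj h') hh.symm
        by_cases hpu : p = u'
        · subst hpu
          rw [upd2_same]
          have : f p ≤ 1 := le_trans hfu'_m (by omega)
          omega
        · rw [upd2_ne]
          · have hle := pair_le_sum f (G.neighborFinset a) (p := p) (q := u') hpnbr hu'nbr hpu
            have hmm : (∑ x ∈ G.neighborFinset a, ∑ b, f (x, b)) = m := rfl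
            omega
          · exact hpu
          · intro hh; exact hp1ne_a (congrArg Prod.fst hh)
      · -- in-column neighbour
        have h1' : a = p.1 := h1
        have h2' : H.Adj z' p.2 := h2
        have hpne_u : p ≠ u' := by
          intro hh
          exact hu'1ne_a (by rw [← hh, ← h1'])
        have hpne_v : p ≠ (a, z) := by
          intro hh
          apply hz'z2
          have hh2 : p.2 = z := congrArg Prod.snd hh
          exact H.adj_symm (hh2 ▸ h2')
        rw [upd2_ne _ _ _ _ _ _ hpne_u hpne_v]
        have h3 : f (a, p.2) = 0 := hz'col p.2 (H.adj_symm h2')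
        rw [h1'] at h3
        exact h3
  have hsa_eq : s a = 1 := by omega
  have hfu_eq : f u = 1 := by omega
  -- Step C : contradiction via the ℓ-column again
  obtain ⟨b', hb'0, hb'ne, hb'col, hb'b⟩ := hpick ℓ {b} (by
    have h1 : (supp ℓ ∪ {b}).card ≤ (supp ℓ).card + 1 := by
      refine le_trans (Finset.card_union_le _ _) ?_
      simp
    have := hsupp_card ℓ
    omega)
  have hb'b2 : ¬ H.Adj b b' := hb'b b (Finset.mem_singleton_self b)
  have hb'neb : b' ≠ b := by
    intro h; exact hb'ne (by simp [h])
  apply hudef (ℓ, b')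
  constructor
  · rw [upd2_ne]
    · exact hb'0
    · intro h
      exact hne_aℓ (((congrArg Prod.fst h).trans hu_col).symm)
    · intro h; exact hb'neb (congrArg Prod.snd h)
  · intro p hp
    rcases hp with h | ⟨h1, h2⟩
    · -- cross : p.1 = a by pendant property
      have h' : G.Adj ℓ p.1 := h
      have hpa : p.1 = a := (hpend p.1).1 h'
      by_cases hpu : p = u
      · subst hpu
        rw [upd2_same]
        omega
      · rw [upd2_ne]
        · have hle := pair_le_sum f ({a} : Finset α) (p := p) (q := u)
            (by simp [hpa]) (by simp [hu_col]) hpu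
          rw [Finset.sum_singleton] at hle
          have hss : (∑ b, f (a, b)) = s a := rfl
          omega
        · exact hpu
        · intro hh
          exact hne_aℓ (hpa.symm.trans (congrArg Prod.fst hh))
    · -- in-column in ℓ
      have h1' : ℓ = p.1 := h1
      have h2' : H.Adj b' p.2 := h2
      have hpne_u : p ≠ u := by
        intro hh
        apply hne_aℓ
        rw [← hu_col, ← hh, ← h1']
      have hpne_v : p ≠ (ℓ, b) := by
        intro hh
        apply hb'b2
        have hh2 : p.2 = b := congrArg Prod.snd hh
        exact H.adj_symm (hh2 ▸ h2')
      rw [upd2_ne _ _ _ _ _ _ hpne_u hpne_v]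
      have h3 : f (ℓ, p.2) = 0 := hb'col p.2 (H.adj_symm h2')
      rw [h1'] at h3
      exact h3

/-- If `γ_t(G) = 2γ(G)` and there is a `γ(G)`-set `D` in which
every vertex is adjacent to a vertex of degree one, then for any graph `H`
with `γ(H) ≥ 4`, `γ_r(G∘H) = 4γ(G)`. -/
theorem weakRoman_lexProd_eq_four_mul_dom {α β : Type*} [Fintype α] [Fintype β]
    (G : SimpleGraph α) (H : SimpleGraph β)
    (h₁ : totalDomNumber G = 2 * domNumber G)
    (h₂ : ∃ D : Finset α, IsDomSet G D ∧ D.card = domNumber G ∧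
      ∀ x ∈ D, ∃ y, G.Adj x y ∧ ∀ z, G.Adj y z ↔ z = x)
    (hH : 4 ≤ domNumber H) :
    weakRomanNumber (lexProd G H) = 4 * domNumber G := by
  obtain ⟨D, hDdom, hDcard, hDpend⟩ := h₂
  -- facts about H
  have hβfree : ∀ B : Finset β, B.card ≤ 3 → ∃ b, b ∉ B ∧ ∀ y ∈ B, ¬ H.Adj y b := by
    intro B hB
    by_contra hno
    push_neg at hno
    have hdom : IsDomSet H B := fun v hv => hno v hv
    have hle : domNumber H ≤ B.card := Nat.sInf_le ⟨B, hdom, rfl⟩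
    omega
  have hβ : Nonempty β := by
    rcases isEmpty_or_nonempty β with hE | hN
    · exfalso
      have hdom : IsDomSet H (∅ : Finset β) := fun v _ => (hE.false v).elim
      have hle : domNumber H ≤ 0 := Nat.sInf_le ⟨∅, hdom, Finset.card_empty⟩
      omega
    · exact hN
  obtain ⟨b₀⟩ := hβ
  -- a minimum total dominating set exists
  have hTne : {k | ∃ S : Finset α, IsTotalDomSet G S ∧ S.card = k}.Nonempty := by
    by_contra hno
    rw [Set.not_nonempty_iff_eq_empty] at hno
    have h0 : totalDomNumber G = 0 := by
      unfold totalDomNumber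
      rw [hno]
      exact Nat.sInf_empty
    have hD0 : D = ∅ := Finset.card_eq_zero.mp (by omega)
    have hne : ¬ IsTotalDomSet G (∅ : Finset α) := by
      intro hS
      have : (0 : ℕ) ∈ {k | ∃ S : Finset α, IsTotalDomSet G S ∧ S.card = k} :=
        ⟨∅, hS, Finset.card_empty⟩
      rw [hno] at this
      exact this
    rw [IsTotalDomSet] at hne
    push_neg at hne
    obtain ⟨v, hv⟩ := hne
    obtain ⟨w, hw, -⟩ := hDdom v (by rw [hD0]; exact Finset.notMem_empty v)
    rw [hD0] at hw
    exact (Finset.notMem_empty w hw)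
  obtain ⟨S, hS, hScard'⟩ := Nat.sInf_mem hTne
  have hScard : S.card = totalDomNumber G := hScard'
  -- ============ upper bound ============
  obtain ⟨f₀, hf₀⟩ : ∃ f₀ : α × β → ℕ, f₀ = fun p => if p.1 ∈ S ∧ p.2 = b₀ then 2 else 0 :=
    ⟨_, rfl⟩
  have hf₀W : IsWRDF (lexProd G H) f₀ := by
    constructor
    · intro v
      rw [hf₀]
      dsimp only
      split <;> omega
    · intro v hv0
      obtain ⟨u₀, hu₀S, hu₀adj⟩ := hS v.1
      have hval : f₀ (u₀, b₀) = 2 := by rw [hf₀]; exact if_pos ⟨hu₀S, rfl⟩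
      refine ⟨(u₀, b₀), Or.inl hu₀adj, by omega, ?_⟩
      rintro w ⟨hw0, hwall⟩
      obtain ⟨u₁, hu₁S, hu₁adj⟩ := hS w.1
      have hadj : (lexProd G H).Adj w (u₁, b₀) := Or.inl (G.adj_symm hu₁adj)
      have h0 := hwall _ hadj
      have hval1 : f₀ (u₁, b₀) = 2 := by rw [hf₀]; exact if_pos ⟨hu₁S, rfl⟩
      by_cases hcase : (u₁, b₀) = (u₀, b₀)
      · rw [hcase, upd2_same] at h0
        omega
      · have hne_v : (u₁, b₀) ≠ v := by
          intro hh
          rw [hh] at hval1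
          omega
        rw [upd2_ne _ _ _ _ _ _ hcase hne_v] at h0
        omega
  have hf₀sum : ∑ v, f₀ v = 2 * S.card := by
    rw [Fintype.sum_prod_type]
    have hcol : ∀ x : α, (∑ b, f₀ (x, b)) = if x ∈ S then 2 else 0 := by
      intro x
      simp only [hf₀]
      by_cases hx : x ∈ S
      · simp [hx]
      · simp [hx]
    calc ∑ x : α, ∑ b, f₀ (x, b) = ∑ x : α, if x ∈ S then 2 else 0 := by
          exact Finset.sum_congr rfl (fun x _ => hcol x)
      _ = ∑ x ∈ Finset.univ ∩ S, 2 := Finset.sum_ite_mem _ _ _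
      _ = 2 * S.card := by
          rw [Finset.univ_inter, Finset.sum_const, smul_eq_mul, mul_comm]
  have hub : weakRomanNumber (lexProd G H) ≤ 4 * domNumber G := by
    have hmem : (4 * domNumber G) ∈
        {k | ∃ f : α × β → ℕ, IsWRDF (lexProd G H) f ∧ ∑ v, f v = k} :=
      ⟨f₀, hf₀W, by rw [hf₀sum]; omega⟩
    exact Nat.sInf_le hmem
  -- ============ lower bound ============
  have hWne : {k | ∃ f : α × β → ℕ, IsWRDF (lexProd G H) f ∧ ∑ v, f v = k}.Nonempty :=
    ⟨∑ v : α × β, 2, fun _ => 2, ⟨fun _ => le_refl 2, fun v hv => by simp at hv⟩, rfl⟩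
  obtain ⟨f, hfW, hfsum'⟩ := Nat.sInf_mem hWne
  have hfsum : ∑ v, f v = weakRomanNumber (lexProd G H) := hfsum'
  clear hfsum' hWne
  have hDub : ∀ T : Finset α, IsTotalDomSet G T → 2 * domNumber G ≤ T.card := by
    intro T hT
    have : totalDomNumber G ≤ T.card := Nat.sInf_le ⟨T, hT, rfl⟩
    omega
  have hpsel : ∃ p : α → α, ∀ x ∈ D, G.Adj x (p x) := by
    refine ⟨fun x => if hx : x ∈ D then (hDpend x hx).choose else x, ?_⟩
    intro x hx
    simp only [dif_pos hx]
    exact (hDpend x hx).choose_spec.1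
  obtain ⟨p, hp⟩ := hpsel
  have hpack : ∀ ai ∈ D, ∀ aj ∈ D, ai ≠ aj →
      ∀ w, ¬ ((w = ai ∨ G.Adj ai w) ∧ (w = aj ∨ G.Adj aj w)) := by
    rintro ai hai aj haj hnij w ⟨hwi, hwj⟩
    set T : Finset α := insert w (D ∪ ((D.erase ai).erase aj).image p) with hT
    have hDsubT : D ⊆ T := fun x hx => Finset.mem_insert_of_mem (Finset.mem_union_left _ hx)
    have hTtot : IsTotalDomSet G T := by
      intro v
      by_cases hvD : v ∈ D
      · by_cases hvi : v = ai
        · subst hvi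
          by_cases hww : w = v
          · rcases hwj with h | h
            · exact absurd (h.symm.trans hww) (Ne.symm hnij)
            · exact ⟨aj, hDsubT haj, hww ▸ h⟩
          · rcases hwi with h | h
            · exact absurd h hww
            · exact ⟨w, Finset.mem_insert_self _ _, G.adj_symm h⟩
        · by_cases hvj : v = aj
          · subst hvj
            by_cases hww : w = v
            · rcases hwi with h | h
              · exact absurd (h.symm.trans hww) hnij
              · exact ⟨ai, hDsubT hai, hww ▸ h⟩
            · rcases hwj with h | h
              · exact absurd h hww
              · exact ⟨w, Finset.mem_insert_self _ _, G.adj_symm h⟩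
          · refine ⟨p v, ?_, G.adj_symm (hp v hvD)⟩
            apply Finset.mem_insert_of_mem
            apply Finset.mem_union_right
            exact Finset.mem_image_of_mem p
              (Finset.mem_erase.2 ⟨hvj, Finset.mem_erase.2 ⟨hvi, hvD⟩⟩)
      · obtain ⟨x, hx, hadj⟩ := hDdom v hvD
        exact ⟨x, hDsubT hx, hadj⟩
    have hg2 : 2 ≤ D.card := by
      have hsub : ({ai, aj} : Finset α) ⊆ D := by
        intro x hx
        rcases Finset.mem_insert.mp hx with rfl | hx
        · exact hai
        · rw [Finset.mem_singleton.mp hx]; exact haj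
      calc 2 = ({ai, aj} : Finset α).card := (Finset.card_pair hnij).symm
        _ ≤ D.card := Finset.card_le_card hsub
    have h3 : ((D.erase ai).erase aj).card = D.card - 2 := by
      rw [Finset.card_erase_of_mem (Finset.mem_erase.2 ⟨Ne.symm hnij, haj⟩),
        Finset.card_erase_of_mem hai]
      omega
    have hcardT : T.card ≤ 2 * D.card - 1 := by
      have h1 : T.card ≤ (D ∪ ((D.erase ai).erase aj).image p).card + 1 :=
        Finset.card_insert_le _ _
      have h2 : (D ∪ ((D.erase ai).erase aj).image p).card
          ≤ D.card + (((D.erase ai).erase aj).image p).card := Finset.card_union_le _ _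
      have h4 : (((D.erase ai).erase aj).image p).card ≤ ((D.erase ai).erase aj).card :=
        Finset.card_image_le
      omega
    have hge := hDub T hTtot
    omega
  obtain ⟨ball, hballdef⟩ : ∃ ball : α → Finset α,
      ball = fun x => insert x (G.neighborFinset x) := ⟨_, rfl⟩
  have hball4 : ∀ a ∈ D, 4 ≤ ∑ x ∈ ball a, ∑ b, f (x, b) := by
    intro a ha
    obtain ⟨ℓ, hℓadj, hℓpend⟩ := hDpend a ha
    rw [hballdef]
    exact ball_ge_four G H f hfW hβfree a ℓ hℓadj hℓpend
  have hdisj : (↑D : Set α).PairwiseDisjoint ball := by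
    intro a ha a' ha' hne
    rw [Function.onFun, Finset.disjoint_left]
    intro w hw hw'
    rw [hballdef] at hw hw'
    refine hpack a (Finset.mem_coe.mp ha) a' (Finset.mem_coe.mp ha') hne w ⟨?_, ?_⟩
    · rcases Finset.mem_insert.mp hw with h | h
      · exact Or.inl h
      · exact Or.inr ((G.mem_neighborFinset a w).1 h)
    · rcases Finset.mem_insert.mp hw' with h | h
      · exact Or.inl h
      · exact Or.inr ((G.mem_neighborFinset a' w).1 h)
  have hlb : 4 * domNumber G ≤ weakRomanNumber (lexProd G H) := by
    have h1 : ∑ _a ∈ D, (4:ℕ) ≤ ∑ a ∈ D, ∑ x ∈ ball a, ∑ b, f (x, b) :=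
      Finset.sum_le_sum (fun a ha => hball4 a ha)
    have h2 : ∑ a ∈ D, ∑ x ∈ ball a, ∑ b, f (x, b)
        = ∑ x ∈ D.biUnion ball, ∑ b, f (x, b) := (Finset.sum_biUnion hdisj).symm
    have h3 : ∑ x ∈ D.biUnion ball, ∑ b, f (x, b) ≤ ∑ x, ∑ b, f (x, b) :=
      Finset.sum_le_sum_of_subset (Finset.subset_univ _)
    have h4 : ∑ v, f v = ∑ x, ∑ b, f (x, b) := Fintype.sum_prod_type f
    have h0 : ∑ _a ∈ D, (4:ℕ) = 4 * D.card := by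
      rw [Finset.sum_const, smul_eq_mul, mul_comm]
    omega
  omega
end

section
/- Let H be a graph and n ≥ 3 an integer, and let K_{1,n} denote the star graph with one centre and n leaves. Then: (i) if γ_r(H) ∈ {2,3}, then γ_r(K_{1,n}∘H) = γ_r(H); (ii) if γ_r(H) ≥ 4, then 3 ≤ γ_r(K_{1,n}∘H) ≤ 4; (iii) if γ(H) ≥ 4, then γ_r(K_{1,n}∘H) = 4. -/
open Finset
open scoped Classical

section Aux
set_option linter.unusedSectionVars false

open Function

lemma updc {γ : Type*} [DecidableEq γ] (f : γ → ℕ) (a : γ) (v : ℕ) :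
    @Function.update γ (fun _ => ℕ) (fun a b => Classical.propDecidable (a = b)) f a v =
      Function.update f a v := by
  have h : (fun a b => Classical.propDecidable (a = b) : DecidableEq γ) = ‹DecidableEq γ› :=
    Subsingleton.elim _ _
  rw [h]

lemma exists_wrdf_min {α : Type*} [Fintype α] (G : SimpleGraph α) :
    ∃ f : α → ℕ, IsWRDF G f ∧ ∑ v, f v = weakRomanNumber G := by
  have hne : {k | ∃ f : α → ℕ, IsWRDF G f ∧ ∑ v, f v = k}.Nonempty :=
    ⟨∑ _v : α, 2, fun _ => 2, ⟨fun _ => le_refl 2, fun v h => by simp at h⟩, rfl⟩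
  exact Nat.sInf_mem hne

lemma wrn_le {α : Type*} [Fintype α] (G : SimpleGraph α) (f : α → ℕ) (hf : IsWRDF G f) :
    weakRomanNumber G ≤ ∑ v, f v := Nat.sInf_le ⟨f, hf, rfl⟩

variable {β : Type*} [Fintype β] {n : ℕ} {H : SimpleGraph β}

lemma adjX {p q : (Fin 1 ⊕ Fin n) × β} :
    (lexProd (completeBipartiteGraph (Fin 1) (Fin n)) H).Adj p q ↔
      ((completeBipartiteGraph (Fin 1) (Fin n)).Adj p.1 q.1 ∨ (p.1 = q.1 ∧ H.Adj p.2 q.2)) :=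
  Iff.rfl

lemma star_lr (i : Fin 1) (j : Fin n) :
    (completeBipartiteGraph (Fin 1) (Fin n)).Adj (Sum.inl i) (Sum.inr j) := by simp

lemma star_rl (i : Fin 1) (j : Fin n) :
    (completeBipartiteGraph (Fin 1) (Fin n)).Adj (Sum.inr j) (Sum.inl i) := by simp

lemma star_not_ll (i i' : Fin 1) :
    ¬ (completeBipartiteGraph (Fin 1) (Fin n)).Adj (Sum.inl i) (Sum.inl i') := by simp

lemma star_not_rr (j j' : Fin n) :
    ¬ (completeBipartiteGraph (Fin 1) (Fin n)).Adj (Sum.inr j) (Sum.inr j') := by simp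

lemma sum_decomp (g : (Fin 1 ⊕ Fin n) × β → ℕ) :
    ∑ v, g v = (∑ b, g (Sum.inl 0, b)) + ∑ j, ∑ b, g (Sum.inr j, b) := by
  rw [Fintype.sum_prod_type, Fintype.sum_sum_type]
  congr 1

lemma card_support_le {γ : Type*} [Fintype γ] (f : γ → ℕ) :
    (Finset.univ.filter (fun x => f x ≠ 0)).card ≤ ∑ x, f x := by
  rw [Finset.card_eq_sum_ones]
  calc ∑ _x ∈ Finset.univ.filter (fun x => f x ≠ 0), 1
      ≤ ∑ x ∈ Finset.univ.filter (fun x => f x ≠ 0), f x := by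
        apply Finset.sum_le_sum
        intro i hi
        simp only [Finset.mem_filter] at hi
        omega
    _ ≤ ∑ x, f x := Finset.sum_le_sum_of_subset (Finset.filter_subset _ _)


lemma upper4 (hn : 3 ≤ n) (hβ : Nonempty β) :
    ∃ g : (Fin 1 ⊕ Fin n) × β → ℕ,
      IsWRDF (lexProd (completeBipartiteGraph (Fin 1) (Fin n)) H) g ∧ ∑ v, g v = 4 := by
  obtain ⟨b0⟩ := hβ
  have hn0 : 0 < n := by omega
  set P : (Fin 1 ⊕ Fin n) × β := (Sum.inl 0, b0) with hP
  set Q : (Fin 1 ⊕ Fin n) × β := (Sum.inr ⟨0, hn0⟩, b0) with hQ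
  have hPQ : P ≠ Q := by simp [hP, hQ]
  set g : (Fin 1 ⊕ Fin n) × β → ℕ :=
    fun p => (if p = P then 2 else 0) + (if p = Q then 2 else 0) with hg
  have hgP : g P = 2 := by simp [hg, hPQ]
  have hgQ : g Q = 2 := by simp [hg, hPQ.symm]
  refine ⟨g, ⟨?_, ?_⟩, ?_⟩
  · intro v
    by_cases h1 : v = P
    · rw [h1, hgP]
    by_cases h2 : v = Q
    · rw [h2, hgQ]
    simp [hg, h1, h2]
  · intro v hv
    simp only [updc]
    have hvP : v ≠ P := fun h => by rw [h, hgP] at hv; omega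
    have hvQ : v ≠ Q := fun h => by rw [h, hgQ] at hv; omega
    -- key: after moving from u ∈ {P,Q} (the other stays positive), no undefended vertex
    have key : ∀ u : (Fin 1 ⊕ Fin n) × β, (u = P ∨ u = Q) →
        (lexProd (completeBipartiteGraph (Fin 1) (Fin n)) H).Adj u v →
        ∃ u', (lexProd (completeBipartiteGraph (Fin 1) (Fin n)) H).Adj u' v ∧ 1 ≤ g u' ∧
          ∀ w, ¬ Undefended (lexProd (completeBipartiteGraph (Fin 1) (Fin n)) H)
            (Function.update (Function.update g v 1) u' (g u' - 1)) w := by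
      intro u hu hadj
      refine ⟨u, hadj, ?_, ?_⟩
      · rcases hu with h | h
        · rw [h, hgP]; omega
        · rw [h, hgQ]; omega
      · intro w hw
        obtain ⟨hw0, hnb⟩ := hw
        set g' := Function.update (Function.update g v 1) u (g u - 1) with hg'
        have hP' : 1 ≤ g' P := by
          rcases hu with h | h
          · subst h; rw [hg', Function.update_self, hgP]
          · subst h
            rw [hg', Function.update_of_ne hPQ, Function.update_of_ne hvP.symm, hgP]
            omega
        have hQ' : 1 ≤ g' Q := by
          rcases hu with h | h
          · subst h
            rw [hg', Function.update_of_ne hPQ.symm, Function.update_of_ne hvQ.symm, hgQ]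
            omega
          · subst h; rw [hg', Function.update_self, hgQ]
        obtain ⟨aw, yw⟩ := w
        rcases aw with i | j
        · exact absurd (hnb Q (Or.inl (by simp [hQ]))) (by omega)
        · exact absurd (hnb P (Or.inl (by simp [hP]))) (by omega)
    obtain ⟨a, y⟩ := v
    rcases a with i | j
    · exact key Q (Or.inr rfl) (Or.inl (by simp [hQ]))
    · exact key P (Or.inl rfl) (Or.inl (by simp [hP]))
  · rw [hg]
    rw [Finset.sum_add_distrib]
    simp


lemma embed (f : β → ℕ) (hf : IsWRDF H f) (h2 : 2 ≤ ∑ b, f b) :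
    ∃ g : (Fin 1 ⊕ Fin n) × β → ℕ,
      IsWRDF (lexProd (completeBipartiteGraph (Fin 1) (Fin n)) H) g ∧ ∑ v, g v = ∑ b, f b := by
  set g : (Fin 1 ⊕ Fin n) × β → ℕ := fun p => if p.1 = Sum.inl 0 then f p.2 else 0 with hgdef
  have hgc : ∀ b, g (Sum.inl 0, b) = f b := fun b => by simp [hgdef]
  have hgl : ∀ (j : Fin n) (b : β), g (Sum.inr j, b) = 0 := fun j b => by simp [hgdef]
  refine ⟨g, ⟨?_, ?_⟩, ?_⟩
  · rintro ⟨a, y⟩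
    rcases a with i | j
    · have hi : i = 0 := Subsingleton.elim _ _
      subst hi
      rw [hgc]; exact hf.1 y
    · rw [hgl]; omega
  · rintro ⟨a, y⟩ hv
    simp only [updc]
    rcases a with i | j
    · -- centre copy
      have hi : i = 0 := Subsingleton.elim _ _
      subst hi
      rw [hgc] at hv
      obtain ⟨u, hadj, hu1, hdef⟩ := hf.2 y hv
      have huy : u ≠ y := hadj.ne
      refine ⟨(Sum.inl 0, u), Or.inr ⟨rfl, hadj⟩, by rw [hgc]; exact hu1, ?_⟩
      set f' := Function.update (Function.update f y 1) u (f u - 1) with hf'def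
      set g' := Function.update (Function.update g (Sum.inl 0, y) 1) (Sum.inl 0, u)
        (g (Sum.inl 0, u) - 1) with hg'def
      have gc' : ∀ z, g' (Sum.inl 0, z) = f' z := by
        intro z
        by_cases hz : z = u
        · subst hz
          rw [hg'def, Function.update_self, hf'def, Function.update_self, hgc]
        · have hne : ((Sum.inl 0 : Fin 1 ⊕ Fin n), z) ≠ (Sum.inl 0, u) := by simp [hz]
          rw [hg'def, Function.update_of_ne hne, hf'def, Function.update_of_ne hz]
          by_cases hzy : z = y
          · subst hzy
            rw [Function.update_self, Function.update_self]
          · have hne2 : ((Sum.inl 0 : Fin 1 ⊕ Fin n), z) ≠ (Sum.inl 0, y) := by simp [hzy]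
            rw [Function.update_of_ne hne2, Function.update_of_ne hzy, hgc]
      have gl' : ∀ (j : Fin n) (z : β), g' (Sum.inr j, z) = 0 := by
        intro j z
        rw [hg'def, Function.update_of_ne (by simp), Function.update_of_ne (by simp), hgl]
      rintro ⟨aw, z⟩ ⟨h0, hnb⟩
      rcases aw with i | j
      · have hi : i = 0 := Subsingleton.elim _ _
        subst hi
        refine hdef z ⟨by rw [← gc']; exact h0, fun x hx => ?_⟩
        have := hnb (Sum.inl 0, x) (Or.inr ⟨rfl, hx⟩)
        rwa [gc'] at this
      · have hy1 : f' y = 1 := by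
          rw [hf'def, Function.update_of_ne (Ne.symm huy), Function.update_self]
        have := hnb (Sum.inl 0, y) (Or.inl (star_rl _ _))
        rw [gc', hy1] at this
        omega
    · -- leaf copy
      have hex : ∃ b, f b ≠ 0 := by
        by_contra h
        push_neg at h
        rw [Finset.sum_eq_zero (fun b _ => h b)] at h2
        omega
      obtain ⟨u0, hu0⟩ := hex
      refine ⟨(Sum.inl 0, u0), Or.inl (star_lr _ _), by rw [hgc]; omega, ?_⟩
      set g' := Function.update (Function.update g (Sum.inr j, y) 1) (Sum.inl 0, u0)
        (g (Sum.inl 0, u0) - 1) with hg'def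
      have gv' : g' (Sum.inr j, y) = 1 := by
        rw [hg'def, Function.update_of_ne (by simp), Function.update_self]
      have gc2 : ∀ z, z ≠ u0 → g' (Sum.inl 0, z) = f z := by
        intro z hz
        rw [hg'def, Function.update_of_ne (by simp [hz]), Function.update_of_ne (by simp), hgc]
      have gcu : g' (Sum.inl 0, u0) = f u0 - 1 := by
        rw [hg'def, Function.update_self, hgc]
      rintro ⟨aw, z⟩ ⟨h0, hnb⟩
      rcases aw with i | j'
      · have := hnb (Sum.inr j, y) (Or.inl (star_lr _ _))
        rw [gv'] at this
        omega
      · by_cases hb : 2 ≤ f u0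
        · have := hnb (Sum.inl 0, u0) (Or.inl (star_rl _ _))
          rw [gcu] at this
          omega
        · have hfu1 : f u0 = 1 := by omega
          have hex2 : ∃ b, b ≠ u0 ∧ f b ≠ 0 := by
            by_contra h
            push_neg at h
            have : ∑ b, f b = f u0 :=
              Finset.sum_eq_single_of_mem u0 (Finset.mem_univ _)
                (fun b _ hb' => h b hb')
            omega
          obtain ⟨b1, hb1, hb1'⟩ := hex2
          have := hnb (Sum.inl 0, b1) (Or.inl (star_rl _ _))
          rw [gc2 b1 hb1] at this
          exact hb1' this
  · rw [sum_decomp]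
    simp [hgc, hgl]


lemma transfer (hn : 3 ≤ n) (hβ : Nonempty β)
    (g : (Fin 1 ⊕ Fin n) × β → ℕ)
    (hg : IsWRDF (lexProd (completeBipartiteGraph (Fin 1) (Fin n)) H) g)
    (hsum : ∑ v, g v ≤ 2) :
    ∃ f : β → ℕ, IsWRDF H f ∧ ∑ b, f b ≤ ∑ v, g v := by
  by_cases hc : ∀ b, g (Sum.inl 0, b) = 0
  · -- centre copy carries no weight: impossible
    exfalso
    set T : Finset (Fin n) := Finset.univ.filter (fun j => ∃ b, g (Sum.inr j, b) ≠ 0) with hT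
    have hTcard : T.card ≤ 2 := by
      have h1 : T.card = ∑ _j ∈ T, 1 := by rw [Finset.card_eq_sum_ones]
      have h2 : ∀ j ∈ T, 1 ≤ ∑ b, g (Sum.inr j, b) := by
        intro j hj
        rw [hT, Finset.mem_filter] at hj
        obtain ⟨-, b, hb⟩ := hj
        have : g (Sum.inr j, b) ≤ ∑ b, g (Sum.inr j, b) :=
          Finset.single_le_sum (f := fun b => g (Sum.inr j, b))
            (fun _ _ => Nat.zero_le _) (Finset.mem_univ b)
        omega
      have h3 : ∑ _j ∈ T, 1 ≤ ∑ j ∈ T, ∑ b, g (Sum.inr j, b) := Finset.sum_le_sum h2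
      have h4 : ∑ j ∈ T, ∑ b, g (Sum.inr j, b) ≤ ∑ j, ∑ b, g (Sum.inr j, b) :=
        Finset.sum_le_sum_of_subset (Finset.filter_subset _ _)
      have h5 := sum_decomp g
      omega
    have hex : ∃ i : Fin n, i ∉ T := by
      by_contra h
      push_neg at h
      have : T = Finset.univ := Finset.eq_univ_iff_forall.mpr h
      rw [this, Finset.card_univ, Fintype.card_fin] at hTcard
      omega
    obtain ⟨i, hi⟩ := hex
    have hempty : ∀ b, g (Sum.inr i, b) = 0 := by
      intro b
      by_contra hb
      exact hi (by rw [hT, Finset.mem_filter]; exact ⟨Finset.mem_univ _, b, hb⟩)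
    obtain ⟨b0⟩ := hβ
    obtain ⟨⟨au, xu⟩, hadj, hu1, -⟩ := hg.2 (Sum.inr i, b0) (hempty b0)
    rcases au with iu | ju
    · have hiu : iu = 0 := Subsingleton.elim _ _
      subst hiu
      rw [hc xu] at hu1
      omega
    · rcases hadj with h | ⟨h1, h2⟩
      · exact star_not_rr _ _ h
      · have hji : ju = i := by simpa using h1
        subst hji
        rw [hempty xu] at hu1
        omega
  · push_neg at hc
    obtain ⟨b1, hb1⟩ := hc
    by_cases hl : ∀ (j : Fin n) (b : β), g (Sum.inr j, b) = 0
    · -- all weight in the centre copy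
      refine ⟨fun b => g (Sum.inl 0, b), ⟨fun b => hg.1 _, ?_⟩, ?_⟩
      · intro y hy
        obtain ⟨⟨au, xu⟩, hadj, hu1, hdef⟩ := hg.2 (Sum.inl 0, y) hy
        simp only [updc] at hdef
        rcases au with iu | ju
        · have hiu : iu = 0 := Subsingleton.elim _ _
          subst hiu
          rcases hadj with h | ⟨-, hH⟩
          · exact absurd h (star_not_ll _ _)
          refine ⟨xu, hH, hu1, ?_⟩
          simp only [updc]
          have huy : xu ≠ y := hH.ne
          set f' := Function.update (Function.update (fun b => g (Sum.inl 0, b)) y 1) xu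
            (g (Sum.inl 0, xu) - 1) with hf'def
          set g' := Function.update (Function.update g (Sum.inl 0, y) 1) (Sum.inl 0, xu)
            (g (Sum.inl 0, xu) - 1) with hg'def
          have gc' : ∀ z, g' (Sum.inl 0, z) = f' z := by
            intro z
            by_cases hz : z = xu
            · subst hz
              rw [hg'def, Function.update_self, hf'def, Function.update_self]
            · rw [hg'def, Function.update_of_ne (by simp [hz]), hf'def,
                Function.update_of_ne hz]
              by_cases hzy : z = y
              · subst hzy
                rw [Function.update_self, Function.update_self]
              · rw [Function.update_of_ne (by simp [hzy]), Function.update_of_ne hzy]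
          have gl' : ∀ (j : Fin n) (z : β), g' (Sum.inr j, z) = 0 := by
            intro j z
            rw [hg'def, Function.update_of_ne (by simp), Function.update_of_ne (by simp)]
            exact hl j z
          rintro z ⟨h0, hnb⟩
          refine hdef (Sum.inl 0, z) ⟨by rw [gc']; exact h0, ?_⟩
          rintro ⟨ax, x2⟩ hx
          rcases ax with ix | jx
          · have hix : ix = 0 := Subsingleton.elim _ _
            subst hix
            rcases hx with h | ⟨-, hH2⟩
            · exact absurd h (star_not_ll _ _)
            · rw [gc']
              exact hnb x2 hH2
          · exact gl' _ _
        · rw [hl ju xu] at hu1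
          omega
      · rw [sum_decomp]
        simp [hl]
    · -- weight split between centre and a leaf copy: impossible
      exfalso
      push_neg at hl
      obtain ⟨j2, b2, hb2⟩ := hl
      set P : (Fin 1 ⊕ Fin n) × β := (Sum.inl 0, b1) with hP
      set Q : (Fin 1 ⊕ Fin n) × β := (Sum.inr j2, b2) with hQ
      have hPQ : P ≠ Q := by simp [hP, hQ]
      have hQP : Q ∈ Finset.univ.erase P := Finset.mem_erase.mpr ⟨Ne.symm hPQ, Finset.mem_univ _⟩
      have e1 : g P + ∑ x ∈ Finset.univ.erase P, g x = ∑ v, g v :=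
        Finset.add_sum_erase _ _ (Finset.mem_univ P)
      have e2 : g Q + ∑ x ∈ (Finset.univ.erase P).erase Q, g x
          = ∑ x ∈ Finset.univ.erase P, g x := Finset.add_sum_erase _ _ hQP
      have hgP : g P ≠ 0 := hb1
      have hrest : ∑ x ∈ (Finset.univ.erase P).erase Q, g x = 0 := by omega
      have hgP1 : g P = 1 := by omega
      have rest0 : ∀ p, p ≠ P → p ≠ Q → g p = 0 := by
        intro p hp hq
        refine (Finset.sum_eq_zero_iff.mp hrest) p ?_
        exact Finset.mem_erase.mpr ⟨hq, Finset.mem_erase.mpr ⟨hp, Finset.mem_univ _⟩⟩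
      -- two leaves different from j2
      obtain ⟨i1, i2, h12, h1j, h2j⟩ : ∃ i1 i2 : Fin n, i1 ≠ i2 ∧ i1 ≠ j2 ∧ i2 ≠ j2 := by
        refine ⟨if j2 = ⟨0, by omega⟩ then ⟨1, by omega⟩ else ⟨0, by omega⟩,
          if j2 = ⟨2, by omega⟩ then ⟨1, by omega⟩ else ⟨2, by omega⟩, ?_, ?_, ?_⟩ <;>
          split_ifs <;> simp_all [Fin.ext_iff] <;> omega
      have hv0 : g (Sum.inr i1, b1) = 0 := by
        refine rest0 _ (by simp [hP]) (by simp [hQ]; intro h; exact absurd h h1j)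
      obtain ⟨u, hadj, hu1, hdef⟩ := hg.2 (Sum.inr i1, b1) hv0
      simp only [updc] at hdef
      have huP : u = P := by
        by_contra hne
        by_cases huQ : u = Q
        · subst huQ
          rcases hadj with h | ⟨h1, -⟩
          · exact star_not_rr _ _ h
          · have hji : j2 = i1 := by simpa [hQ] using h1
            exact h1j hji.symm
        · rw [rest0 u hne huQ] at hu1
          omega
      subst huP
      refine hdef (Sum.inr i2, b1) ⟨?_, ?_⟩
      · rw [Function.update_of_ne (by simp [hP]), Function.update_of_ne (by simp [h12.symm])]
        exact rest0 _ (by simp [hP]) (by simp [hQ]; intro h; exact absurd h h2j)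
      · rintro ⟨ax, x2⟩ hx
        rcases ax with ix | jx
        · have hix : ix = 0 := Subsingleton.elim _ _
          subst hix
          by_cases hx2 : x2 = b1
          · rw [show ((Sum.inl 0 : Fin 1 ⊕ Fin n), x2) = P by rw [hP, hx2],
              Function.update_self, hgP1]
          · rw [Function.update_of_ne (by simp [hP, hx2]), Function.update_of_ne (by simp)]
            exact rest0 _ (by simp [hP, hx2]) (by simp [hQ])
        · rcases hx with h | ⟨h1, -⟩
          · exact absurd h (star_not_rr _ _)
          · have hjx : jx = i2 := by simpa using h1.symm
            subst hjx
            rw [Function.update_of_ne (by simp [hP]), Function.update_of_ne (by simp [h12.symm])]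
            exact rest0 _ (by simp [hP]) (by simp [hQ]; intro h; exact absurd h h2j)


lemma no_le3 (hn : 3 ≤ n)
    (hdom : ∀ D : Finset β, IsDomSet H D → 4 ≤ D.card)
    (g : (Fin 1 ⊕ Fin n) × β → ℕ)
    (hg : IsWRDF (lexProd (completeBipartiteGraph (Fin 1) (Fin n)) H) g) :
    4 ≤ ∑ v, g v := by
  by_contra hlt
  push_neg at hlt
  have hsum : ∑ v, g v ≤ 3 := by omega
  have hβ : Nonempty β := by
    by_contra h
    rw [not_nonempty_iff] at h
    have hD : IsDomSet H (∅ : Finset β) := fun v _ => (h.false v).elim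
    have := hdom ∅ hD
    simp at this
  have notDom : ∀ D : Finset β, D.card ≤ 3 → ∃ y, y ∉ D ∧ ∀ b ∈ D, ¬ H.Adj b y := by
    intro D hD
    by_contra h
    push_neg at h
    have hDs : IsDomSet H D := fun v hv => h v hv
    have := hdom D hDs
    omega
  have copy_le : ∀ a : Fin 1 ⊕ Fin n, ∑ b, g (a, b) ≤ ∑ v, g v := by
    intro a
    rw [Fintype.sum_prod_type]
    exact Finset.single_le_sum (f := fun a => ∑ b, g (a, b))
      (fun _ _ => Nat.zero_le _) (Finset.mem_univ a)
  by_cases hc : ∀ b, g (Sum.inl 0, b) = 0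
  · -- Case A : centre copy carries no weight
    have hn0 : 0 < n := by omega
    set i0 : Fin n := ⟨0, hn0⟩ with hi0
    set Ds : Finset β := Finset.univ.filter (fun b => g (Sum.inr i0, b) ≠ 0) with hDs
    have hcard : Ds.card ≤ 3 :=
      le_trans (card_support_le _) (le_trans (copy_le _) hsum)
    obtain ⟨y, hy, hyadj⟩ := notDom Ds hcard
    have hy0 : g (Sum.inr i0, y) = 0 := by
      by_contra hne
      exact hy (Finset.mem_filter.mpr ⟨Finset.mem_univ _, hne⟩)
    obtain ⟨⟨au, xu⟩, hadj, hu1, -⟩ := hg.2 (Sum.inr i0, y) hy0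
    rcases au with iu | ju
    · have hiu : iu = 0 := Subsingleton.elim _ _
      subst hiu
      rw [hc xu] at hu1
      omega
    · rcases hadj with h | ⟨h1, h2⟩
      · exact star_not_rr _ _ h
      · have hji : ju = i0 := by simpa using h1
        subst hji
        have hmem : xu ∈ Ds := Finset.mem_filter.mpr ⟨Finset.mem_univ _, by omega⟩
        exact hyadj xu hmem h2
  · push_neg at hc
    obtain ⟨b1, hb1⟩ := hc
    set Sc : ℕ := ∑ b, g (Sum.inl 0, b) with hScdef
    set L : ℕ := ∑ j, ∑ b, g (Sum.inr j, b) with hLdef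
    have hdecomp : ∑ v, g v = Sc + L := sum_decomp g
    have hSc1 : 1 ≤ Sc := by
      have : g (Sum.inl 0, b1) ≤ Sc :=
        Finset.single_le_sum (f := fun b => g (Sum.inl 0, b))
          (fun _ _ => Nat.zero_le _) (Finset.mem_univ b1)
      omega
    set Cs : Finset β := Finset.univ.filter (fun b => g (Sum.inl 0, b) ≠ 0) with hCs
    have hCsle : Cs.card ≤ Sc := card_support_le _
    have hCmem : ∀ b : β, b ∉ Cs → g (Sum.inl 0, b) = 0 := by
      intro b hb
      by_contra hne
      exact hb (Finset.mem_filter.mpr ⟨Finset.mem_univ _, hne⟩)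
    by_cases hSc : Sc = 1
    · -- Subcase B1 : centre weight exactly one
      have e1 : g (Sum.inl 0, b1) + ∑ b ∈ Finset.univ.erase b1, g (Sum.inl 0, b) = Sc :=
        Finset.add_sum_erase _ (fun b => g (Sum.inl 0, b)) (Finset.mem_univ b1)
      have hgb1 : g (Sum.inl 0, b1) = 1 := by omega
      have centre0 : ∀ b, b ≠ b1 → g (Sum.inl 0, b) = 0 := by
        intro b hb
        have h0 : ∑ b ∈ Finset.univ.erase b1, g (Sum.inl 0, b) = 0 := by omega
        exact (Finset.sum_eq_zero_iff.mp h0) b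
          (Finset.mem_erase.mpr ⟨hb, Finset.mem_univ _⟩)
      -- find a leaf copy with no weight
      set T : Finset (Fin n) := Finset.univ.filter (fun j => ∃ b, g (Sum.inr j, b) ≠ 0) with hT
      have hTcard : T.card ≤ 2 := by
        have h1 : T.card = ∑ _j ∈ T, 1 := by rw [Finset.card_eq_sum_ones]
        have h2 : ∀ j ∈ T, 1 ≤ ∑ b, g (Sum.inr j, b) := by
          intro j hj
          rw [hT, Finset.mem_filter] at hj
          obtain ⟨-, b, hb⟩ := hj
          have : g (Sum.inr j, b) ≤ ∑ b, g (Sum.inr j, b) :=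
            Finset.single_le_sum (f := fun b => g (Sum.inr j, b))
              (fun _ _ => Nat.zero_le _) (Finset.mem_univ b)
          omega
        have h3 : ∑ _j ∈ T, 1 ≤ ∑ j ∈ T, ∑ b, g (Sum.inr j, b) := Finset.sum_le_sum h2
        have h4 : ∑ j ∈ T, ∑ b, g (Sum.inr j, b) ≤ L :=
          Finset.sum_le_sum_of_subset (Finset.filter_subset _ _)
        omega
      have hex : ∃ i : Fin n, i ∉ T := by
        by_contra h
        push_neg at h
        have : T = Finset.univ := Finset.eq_univ_iff_forall.mpr h
        rw [this, Finset.card_univ, Fintype.card_fin] at hTcard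
        omega
      obtain ⟨i, hi⟩ := hex
      have hempty : ∀ b, g (Sum.inr i, b) = 0 := by
        intro b
        by_contra hb
        exact hi (by rw [hT, Finset.mem_filter]; exact ⟨Finset.mem_univ _, b, hb⟩)
      obtain ⟨y0⟩ := hβ
      obtain ⟨⟨au, xu⟩, hadj, hu1, hdef⟩ := hg.2 (Sum.inr i, y0) (hempty y0)
      simp only [updc] at hdef
      -- the defender must be the centre vertex (inl 0, b1)
      have hau : au = Sum.inl 0 ∧ xu = b1 := by
        rcases au with iu | ju
        · have hiu : iu = 0 := Subsingleton.elim _ _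
          subst hiu
          refine ⟨rfl, ?_⟩
          by_contra hne
          rw [centre0 xu hne] at hu1
          omega
        · exfalso
          rcases hadj with h | ⟨h1, -⟩
          · exact star_not_rr _ _ h
          · have hji : ju = i := by simpa using h1
            subst hji
            rw [hempty xu] at hu1
            omega
      obtain ⟨hau1, hau2⟩ := hau
      subst hau1; subst hau2
      obtain ⟨z, hz, hzadj⟩ := notDom {y0} (by simp)
      have hzy0 : z ≠ y0 := by simpa using hz
      have hy0z : ¬ H.Adj y0 z := hzadj y0 (Finset.mem_singleton_self _)
      refine hdef (Sum.inr i, z) ⟨?_, ?_⟩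
      · rw [Function.update_of_ne (by simp), Function.update_of_ne (by simp [hzy0])]
        exact hempty z
      · rintro ⟨ax, x2⟩ hx
        rcases ax with ix | jx
        · have hix : ix = 0 := Subsingleton.elim _ _
          subst hix
          by_cases hx2 : x2 = xu
          · subst hx2
            rw [Function.update_self, hgb1]
          · rw [Function.update_of_ne (by simp [hx2]), Function.update_of_ne (by simp)]
            exact centre0 x2 hx2
        · rcases hx with h | ⟨h1, h2⟩
          · exact absurd h (star_not_rr _ _)
          · have hji : jx = i := by simpa using h1.symm
            subst hji
            by_cases hx2 : x2 = y0
            · subst hx2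
              exact absurd h2.symm hy0z
            · rw [Function.update_of_ne (by simp), Function.update_of_ne (by simp [hx2])]
              exact hempty x2
    · -- Subcase B2 : centre weight at least two, so leaf weight at most one
      have hSc2 : 2 ≤ Sc := by omega
      have hL1 : L ≤ 1 := by omega
      by_cases hL : L = 0
      · -- all weight in the centre copy
        have leaf0 : ∀ (j : Fin n) (b : β), g (Sum.inr j, b) = 0 := by
          intro j b
          have h0 : ∑ b, g (Sum.inr j, b) = 0 := by
            have h2 : ∑ j, ∑ b, g (Sum.inr j, b) = 0 := by omega
            exact (Finset.sum_eq_zero_iff.mp h2) j (Finset.mem_univ _)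
          exact (Finset.sum_eq_zero_iff.mp h0) b (Finset.mem_univ _)
        have hCs3 : Cs.card ≤ 3 := by omega
        obtain ⟨y0, hy0, hy0adj⟩ := notDom Cs hCs3
        obtain ⟨⟨au, xu⟩, hadj, hu1, -⟩ := hg.2 (Sum.inl 0, y0) (hCmem y0 hy0)
        rcases au with iu | ju
        · have hiu : iu = 0 := Subsingleton.elim _ _
          subst hiu
          rcases hadj with h | ⟨-, h2⟩
          · exact star_not_ll _ _ h
          · have hmem : xu ∈ Cs := Finset.mem_filter.mpr ⟨Finset.mem_univ _, by omega⟩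
            exact hy0adj xu hmem h2
        · rw [leaf0 ju xu] at hu1
          omega
      · -- exactly one unit of weight on the leaves
        have hLeq : L = 1 := by omega
        have hScEq : Sc = 2 := by omega
        have hCs2 : Cs.card ≤ 2 := by omega
        have hlex : ∃ (j : Fin n) (b : β), g (Sum.inr j, b) ≠ 0 := by
          by_contra h
          push_neg at h
          have : L = 0 := by
            rw [hLdef]
            exact Finset.sum_eq_zero (fun j _ => Finset.sum_eq_zero (fun b _ => h j b))
          omega
        obtain ⟨j0, b2, hb2⟩ := hlex
        have hLprod : ∑ p : Fin n × β, g (Sum.inr p.1, p.2) = L := by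
          rw [hLdef, Fintype.sum_prod_type]
        have e1 : g (Sum.inr j0, b2)
            + ∑ p ∈ Finset.univ.erase (j0, b2), g (Sum.inr p.1, p.2)
            = ∑ p : Fin n × β, g (Sum.inr p.1, p.2) :=
          Finset.add_sum_erase _ (fun p : Fin n × β => g (Sum.inr p.1, p.2))
            (Finset.mem_univ (j0, b2))
        have hgu1 : g (Sum.inr j0, b2) = 1 := by omega
        have leafrest : ∀ (j : Fin n) (b : β), (j, b) ≠ (j0, b2) → g (Sum.inr j, b) = 0 := by
          intro j b hne
          have h0 : ∑ p ∈ Finset.univ.erase (j0, b2), g (Sum.inr p.1, p.2) = 0 := by omega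
          exact (Finset.sum_eq_zero_iff.mp h0) (j, b)
            (Finset.mem_erase.mpr ⟨hne, Finset.mem_univ _⟩)
        -- first witness : not dominated by Cs ∪ {b2}
        have hD1 : (insert b2 Cs).card ≤ 3 :=
          le_trans (Finset.card_insert_le _ _) (by omega)
        obtain ⟨y0, hy0m, hy0adj⟩ := notDom (insert b2 Cs) hD1
        have hy0Cs : y0 ∉ Cs := fun h => hy0m (Finset.mem_insert_of_mem h)
        have hv0 : g (Sum.inl 0, y0) = 0 := hCmem y0 hy0Cs
        obtain ⟨⟨au, xu⟩, hadj, hu1, hdef⟩ := hg.2 (Sum.inl 0, y0) hv0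
        simp only [updc] at hdef
        have hau : au = Sum.inr j0 ∧ xu = b2 := by
          rcases au with iu | ju
          · exfalso
            have hiu : iu = 0 := Subsingleton.elim _ _
            subst hiu
            rcases hadj with h | ⟨-, h2⟩
            · exact star_not_ll _ _ h
            · have hmem : xu ∈ Cs := Finset.mem_filter.mpr ⟨Finset.mem_univ _, by omega⟩
              exact hy0adj xu (Finset.mem_insert_of_mem hmem) h2
          · have hju : (ju, xu) = (j0, b2) := by
              by_contra hne
              rw [leafrest ju xu hne] at hu1
              omega
            have h1 : ju = j0 := (Prod.mk.injEq _ _ _ _ ▸ hju).1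
            have h2 : xu = b2 := (Prod.mk.injEq _ _ _ _ ▸ hju).2
            exact ⟨by rw [h1], h2⟩
        obtain ⟨hau1, hau2⟩ := hau
        subst hau2
        -- second witness : not dominated by Cs ∪ {y0}
        have hD2 : (insert y0 Cs).card ≤ 3 :=
          le_trans (Finset.card_insert_le _ _) (by omega)
        obtain ⟨z, hzm, hzadj⟩ := notDom (insert y0 Cs) hD2
        have hzy0 : z ≠ y0 := fun h => hzm (h ▸ Finset.mem_insert_self _ _)
        have hzCs : z ∉ Cs := fun h => hzm (Finset.mem_insert_of_mem h)
        have hy0z : ¬ H.Adj y0 z := hzadj y0 (Finset.mem_insert_self _ _)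
        refine hdef (Sum.inl 0, z) ⟨?_, ?_⟩
        · rw [Function.update_of_ne (by rw [hau1]; simp),
            Function.update_of_ne (by simp [hzy0])]
          exact hCmem z hzCs
        · rintro ⟨ax, x2⟩ hx
          rcases ax with ix | jx
          · have hix : ix = 0 := Subsingleton.elim _ _
            subst hix
            rcases hx with h | ⟨-, h2⟩
            · exact absurd h (star_not_ll _ _)
            by_cases hx2 : x2 = y0
            · subst hx2
              exact absurd h2.symm hy0z
            · rw [Function.update_of_ne (by rw [hau1]; simp),
                Function.update_of_ne (by simp [hx2])]
              by_contra hne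
              have hmem : x2 ∈ Cs := Finset.mem_filter.mpr ⟨Finset.mem_univ _, hne⟩
              exact hzadj x2 (Finset.mem_insert_of_mem hmem) h2.symm
          · by_cases hxu : ((Sum.inr jx : Fin 1 ⊕ Fin n), x2) = (Sum.inr j0, xu)
            · rw [hau1, hxu, Function.update_self, hgu1]
            · rw [Function.update_of_ne (by rw [hau1]; exact hxu),
                Function.update_of_ne (by simp)]
              refine leafrest jx x2 ?_
              intro h
              exact hxu (by rw [Prod.mk.injEq] at h; rw [h.1, h.2])

end Aux

/-- For the star `K_{1,n}`, `n ≥ 3`: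
(i) if `γ_r(H) ∈ {2,3}` then `γ_r(K_{1,n}∘H) = γ_r(H)`;
(ii) if `γ_r(H) ≥ 4` then `3 ≤ γ_r(K_{1,n}∘H) ≤ 4`;
(iii) if `γ(H) ≥ 4` then `γ_r(K_{1,n}∘H) = 4`. -/
theorem weakRoman_lexProd_star {β : Type*} [Fintype β]
    (n : ℕ) (hn : 3 ≤ n) (H : SimpleGraph β) :
    ((weakRomanNumber H = 2 ∨ weakRomanNumber H = 3) →
      weakRomanNumber (lexProd (completeBipartiteGraph (Fin 1) (Fin n)) H) =
        weakRomanNumber H) ∧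
    (4 ≤ weakRomanNumber H →
      3 ≤ weakRomanNumber (lexProd (completeBipartiteGraph (Fin 1) (Fin n)) H) ∧
      weakRomanNumber (lexProd (completeBipartiteGraph (Fin 1) (Fin n)) H) ≤ 4) ∧
    (4 ≤ domNumber H →
      weakRomanNumber (lexProd (completeBipartiteGraph (Fin 1) (Fin n)) H) = 4) := by
  have wrn_empty : IsEmpty β → weakRomanNumber H = 0 := by
    intro hne
    have h0 : IsWRDF H (fun _ => 0) :=
      ⟨fun v => (hne.false v).elim, fun v _ => (hne.false v).elim⟩
    have := wrn_le H (fun _ => 0) h0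
    simpa using this
  refine ⟨?_, ?_, ?_⟩
  · -- (i)
    intro h
    have hβ : Nonempty β := by
      by_contra hne
      rw [not_nonempty_iff] at hne
      have := wrn_empty hne
      rcases h with h | h <;> omega
    obtain ⟨f0, hf0, hf0sum⟩ := exists_wrdf_min H
    have h2f : 2 ≤ ∑ b, f0 b := by rcases h with h | h <;> omega
    obtain ⟨g0, hg0, hg0sum⟩ := embed f0 hf0 h2f
    have hle : weakRomanNumber (lexProd (completeBipartiteGraph (Fin 1) (Fin n)) H) ≤
        weakRomanNumber H := by
      rw [← hf0sum, ← hg0sum]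
      exact wrn_le _ _ hg0
    have hge : weakRomanNumber H ≤
        weakRomanNumber (lexProd (completeBipartiteGraph (Fin 1) (Fin n)) H) := by
      by_contra hlt
      push_neg at hlt
      obtain ⟨gm, hgm, hgmsum⟩ :=
        exists_wrdf_min (lexProd (completeBipartiteGraph (Fin 1) (Fin n)) H)
      have hsm : ∑ v, gm v ≤ 2 := by rcases h with h | h <;> omega
      obtain ⟨f1, hf1, hf1le⟩ := transfer hn hβ gm hgm hsm
      have h3 := wrn_le H f1 hf1
      omega
    exact le_antisymm hle hge
  · -- (ii)
    intro h4
    have hβ : Nonempty β := by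
      by_contra hne
      rw [not_nonempty_iff] at hne
      have := wrn_empty hne
      omega
    constructor
    · by_contra hlt
      push_neg at hlt
      obtain ⟨gm, hgm, hgmsum⟩ :=
        exists_wrdf_min (lexProd (completeBipartiteGraph (Fin 1) (Fin n)) H)
      have hsm : ∑ v, gm v ≤ 2 := by omega
      obtain ⟨f1, hf1, hf1le⟩ := transfer hn hβ gm hgm hsm
      have h3 := wrn_le H f1 hf1
      omega
    · obtain ⟨g4, hg4, hg4sum⟩ := upper4 (H := H) hn hβ
      have := wrn_le _ _ hg4
      omega
  · -- (iii)
    intro hd4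
    have hβ : Nonempty β := by
      by_contra hne
      rw [not_nonempty_iff] at hne
      have hD : IsDomSet H (∅ : Finset β) := fun v _ => (hne.false v).elim
      have : domNumber H ≤ 0 := Nat.sInf_le ⟨∅, hD, rfl⟩
      omega
    have hdom : ∀ D : Finset β, IsDomSet H D → 4 ≤ D.card := by
      intro D hD
      exact le_trans hd4 (Nat.sInf_le ⟨D, hD, rfl⟩)
    obtain ⟨g4, hg4, hg4sum⟩ := upper4 (H := H) hn hβ
    have hle := wrn_le _ _ hg4
    obtain ⟨gm, hgm, hgmsum⟩ :=
      exists_wrdf_min (lexProd (completeBipartiteGraph (Fin 1) (Fin n)) H)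
    have hge := no_le3 hn hdom gm hgm
    omega
end

section
/- For any integer n ≥ 2 and any graph H with γ(H) ≥ 4, the weak Roman domination number of the lexicographic product of a path with H is: γ_r(P_n∘H) = n if n ≡ 0 (mod 4), γ_r(P_n∘H) = n+2 if n ≡ 2 (mod 4), and γ_r(P_n∘H) = n+1 otherwise (i.e. if n is odd). -/
open Finset
open scoped Classical

def cond2 (l c r : ℕ) : Prop := 2 ≤ l + r ∨ (3 ≤ c ∧ 1 ≤ l + r) ∨ 4 ≤ c

def phi (m : ℕ) : ℕ := m + m % 4 - 2 * (m % 4 / 3)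

lemma sum1 (w : ℕ → ℕ) (a : ℕ) : ∑ i ∈ Ico a (a+1), w i = w a := by
  rw [Finset.sum_Ico_succ_top (le_refl a), Finset.Ico_self, Finset.sum_empty, zero_add]

lemma sum2 (w : ℕ → ℕ) (a : ℕ) : ∑ i ∈ Ico a (a+2), w i = w a + w (a+1) := by
  have e : a + 2 = (a+1) + 1 := by omega
  rw [e, Finset.sum_Ico_succ_top (by omega), sum1]

lemma sum3 (w : ℕ → ℕ) (a : ℕ) : ∑ i ∈ Ico a (a+3), w i = w a + w (a+1) + w (a+2) := by
  have e : a + 3 = (a+2) + 1 := by omega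
  rw [e, Finset.sum_Ico_succ_top (by omega), sum2]

lemma sum4 (w : ℕ → ℕ) (a : ℕ) :
    ∑ i ∈ Ico a (a+4), w i = w a + w (a+1) + w (a+2) + w (a+3) := by
  have e : a + 4 = (a+3) + 1 := by omega
  rw [e, Finset.sum_Ico_succ_top (by omega), sum3]

lemma sum5 (w : ℕ → ℕ) (a : ℕ) :
    ∑ i ∈ Ico a (a+5), w i = w a + w (a+1) + w (a+2) + w (a+3) + w (a+4) := by
  have e : a + 5 = (a+4) + 1 := by omega
  rw [e, Finset.sum_Ico_succ_top (by omega), sum4]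

lemma lemE : ∀ k a (w : ℕ → ℕ),
    (∀ i, a < i → i ≤ a + k → cond2 (w (i-1)) (w i) (w (i+1))) →
    phi k ≤ ∑ i ∈ Ico a (a+k+2), w i := by
  intro k
  induction k using Nat.strong_induction_on with
  | _ k ih =>
    intro a w hc
    by_cases hk : k ≤ 3
    · interval_cases k
      · have : phi 0 = 0 := by unfold phi; omega
        omega
      · have h1 := hc (a+1) (by omega) (by omega)
        have e : a + 1 - 1 = a := by omega
        have e' : a + 1 + 1 = a + 2 := by omega
        rw [e, e'] at h1
        have e2 : a + 1 + 2 = a + 3 := by omega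
        rw [e2, sum3]
        have hp : phi 1 = 2 := by unfold phi; omega
        unfold cond2 at h1; omega
      · have h1 := hc (a+1) (by omega) (by omega)
        have h2 := hc (a+2) (by omega) (by omega)
        have e1 : a + 1 - 1 = a := by omega
        have e2 : a + 2 - 1 = a + 1 := by omega
        rw [e1] at h1; rw [e2] at h2
        have e3 : a + 2 + 2 = a + 4 := by omega
        rw [e3, sum4]
        have hp : phi 2 = 4 := by unfold phi; omega
        have e4 : a + 1 + 1 = a + 2 := by omega
        have e5 : a + 2 + 1 = a + 3 := by omega
        rw [e4] at h1; rw [e5] at h2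
        unfold cond2 at h1 h2; omega
      · have h1 := hc (a+1) (by omega) (by omega)
        have h2 := hc (a+2) (by omega) (by omega)
        have h3 := hc (a+3) (by omega) (by omega)
        have e1 : a + 1 - 1 = a := by omega
        have e2 : a + 2 - 1 = a + 1 := by omega
        have e3 : a + 3 - 1 = a + 2 := by omega
        rw [e1] at h1; rw [e2] at h2; rw [e3] at h3
        have e4 : a + 1 + 1 = a + 2 := by omega
        have e5 : a + 2 + 1 = a + 3 := by omega
        have e6 : a + 3 + 1 = a + 4 := by omega
        rw [e4] at h1; rw [e5] at h2; rw [e6] at h3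
        have e7 : a + 3 + 2 = a + 5 := by omega
        rw [e7, sum5]
        have hp : phi 3 = 4 := by unfold phi; omega
        unfold cond2 at h1 h2 h3; omega
    · push_neg at hk
      have h1 : phi 2 ≤ ∑ i ∈ Ico a (a+2+2), w i :=
        ih 2 (by omega) a w (fun i hi1 hi2 => hc i hi1 (by omega))
      have h2 : phi (k-4) ≤ ∑ i ∈ Ico (a+4) (a+4+(k-4)+2), w i :=
        ih (k-4) (by omega) (a+4) w (fun i hi1 hi2 => hc i (by omega) (by omega))
      have e1 : a + 2 + 2 = a + 4 := by omega
      have e2 : a + 4 + (k-4) + 2 = a + k + 2 := by omega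
      rw [e1] at h1; rw [e2] at h2
      have hs := Finset.sum_Ico_consecutive w (show a ≤ a+4 by omega) (show a+4 ≤ a+k+2 by omega)
      have hphi : phi k = phi 2 + phi (k-4) := by unfold phi; omega
      omega

lemma lemD : ∀ k, 1 ≤ k → ∀ (a : ℕ) (w : ℕ → ℕ),
    (∀ i, a < i → i < a + k → cond2 (w (i-1)) (w i) (w (i+1))) →
    cond2 (w (a+k-1)) (w (a+k)) 0 →
    phi k ≤ ∑ i ∈ Ico a (a+k+1), w i := by
  intro k
  induction k using Nat.strong_induction_on with
  | _ k ih =>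
    intro hk1 a w hc hb
    by_cases hk : k ≤ 4
    · interval_cases k
      · have e1 : a + 1 - 1 = a := by omega
        rw [e1] at hb
        have e2 : a + 1 + 1 = a + 2 := by omega
        rw [e2, sum2]
        have hp : phi 1 = 2 := by unfold phi; omega
        unfold cond2 at hb; omega
      · have h1 := hc (a+1) (by omega) (by omega)
        have e1 : a + 1 - 1 = a := by omega
        have e2 : a + 1 + 1 = a + 2 := by omega
        have e3 : a + 2 - 1 = a + 1 := by omega
        rw [e1, e2] at h1; rw [e3] at hb
        have e4 : a + 2 + 1 = a + 3 := by omega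
        rw [e4, sum3]
        have hp : phi 2 = 4 := by unfold phi; omega
        unfold cond2 at h1 hb; omega
      · have h1 := hc (a+1) (by omega) (by omega)
        have h2 := hc (a+2) (by omega) (by omega)
        have e1 : a + 1 - 1 = a := by omega
        have e2 : a + 1 + 1 = a + 2 := by omega
        have e3 : a + 2 - 1 = a + 1 := by omega
        have e4 : a + 2 + 1 = a + 3 := by omega
        have e5 : a + 3 - 1 = a + 2 := by omega
        rw [e1, e2] at h1; rw [e3, e4] at h2; rw [e5] at hb
        have e6 : a + 3 + 1 = a + 4 := by omega
        rw [e6, sum4]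
        have hp : phi 3 = 4 := by unfold phi; omega
        unfold cond2 at h1 h2 hb; omega
      · have h1 := hc (a+1) (by omega) (by omega)
        have h2 := hc (a+2) (by omega) (by omega)
        have h3 := hc (a+3) (by omega) (by omega)
        have e1 : a + 1 - 1 = a := by omega
        have e2 : a + 1 + 1 = a + 2 := by omega
        have e3 : a + 2 - 1 = a + 1 := by omega
        have e4 : a + 2 + 1 = a + 3 := by omega
        have e5 : a + 3 - 1 = a + 2 := by omega
        have e6 : a + 3 + 1 = a + 4 := by omega
        have e7 : a + 4 - 1 = a + 3 := by omega
        rw [e1, e2] at h1; rw [e3, e4] at h2; rw [e5, e6] at h3; rw [e7] at hb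
        have e8 : a + 4 + 1 = a + 5 := by omega
        rw [e8, sum5]
        have hp : phi 4 = 4 := by unfold phi; omega
        unfold cond2 at h1 h2 h3 hb; omega
    · push_neg at hk
      have h1 : phi 2 ≤ ∑ i ∈ Ico a (a+2+2), w i :=
        lemE 2 a w (fun i hi1 hi2 => hc i hi1 (by omega))
      have hb' : cond2 (w (a+4+(k-4)-1)) (w (a+4+(k-4))) 0 := by
        have e1 : a+4+(k-4)-1 = a+k-1 := by omega
        have e2 : a+4+(k-4) = a+k := by omega
        rw [e1, e2]; exact hb
      have h2 : phi (k-4) ≤ ∑ i ∈ Ico (a+4) (a+4+(k-4)+1), w i :=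
        ih (k-4) (by omega) (by omega) (a+4) w
          (fun i hi1 hi2 => hc i (by omega) (by omega)) hb'
      have e1 : a + 2 + 2 = a + 4 := by omega
      have e2 : a + 4 + (k-4) + 1 = a + k + 1 := by omega
      rw [e1] at h1; rw [e2] at h2
      have hs := Finset.sum_Ico_consecutive w (show a ≤ a+4 by omega) (show a+4 ≤ a+k+1 by omega)
      have hphi : phi k = phi 2 + phi (k-4) := by unfold phi; omega
      omega

lemma lemD' : ∀ k, 1 ≤ k → ∀ (a : ℕ) (w : ℕ → ℕ),
    cond2 0 (w a) (w (a+1)) →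
    (∀ i, a < i → i < a + k → cond2 (w (i-1)) (w i) (w (i+1))) →
    phi k ≤ ∑ i ∈ Ico a (a+k+1), w i := by
  intro k
  induction k using Nat.strong_induction_on with
  | _ k ih =>
    intro hk1 a w hb hc
    by_cases hk : k ≤ 4
    · interval_cases k
      · have e2 : a + 1 + 1 = a + 2 := by omega
        rw [e2, sum2]
        have hp : phi 1 = 2 := by unfold phi; omega
        unfold cond2 at hb; omega
      · have h1 := hc (a+1) (by omega) (by omega)
        have e1 : a + 1 - 1 = a := by omega
        have e2 : a + 1 + 1 = a + 2 := by omega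
        rw [e1, e2] at h1
        have e4 : a + 2 + 1 = a + 3 := by omega
        rw [e4, sum3]
        have hp : phi 2 = 4 := by unfold phi; omega
        unfold cond2 at h1 hb; omega
      · have h1 := hc (a+1) (by omega) (by omega)
        have h2 := hc (a+2) (by omega) (by omega)
        have e1 : a + 1 - 1 = a := by omega
        have e2 : a + 1 + 1 = a + 2 := by omega
        have e3 : a + 2 - 1 = a + 1 := by omega
        have e4 : a + 2 + 1 = a + 3 := by omega
        rw [e1, e2] at h1; rw [e3, e4] at h2
        have e6 : a + 3 + 1 = a + 4 := by omega
        rw [e6, sum4]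
        have hp : phi 3 = 4 := by unfold phi; omega
        unfold cond2 at h1 h2 hb; omega
      · have h1 := hc (a+1) (by omega) (by omega)
        have h2 := hc (a+2) (by omega) (by omega)
        have h3 := hc (a+3) (by omega) (by omega)
        have e1 : a + 1 - 1 = a := by omega
        have e2 : a + 1 + 1 = a + 2 := by omega
        have e3 : a + 2 - 1 = a + 1 := by omega
        have e4 : a + 2 + 1 = a + 3 := by omega
        have e5 : a + 3 - 1 = a + 2 := by omega
        have e6 : a + 3 + 1 = a + 4 := by omega
        rw [e1, e2] at h1; rw [e3, e4] at h2; rw [e5, e6] at h3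
        have e8 : a + 4 + 1 = a + 5 := by omega
        rw [e8, sum5]
        have hp : phi 4 = 4 := by unfold phi; omega
        unfold cond2 at h1 h2 h3 hb; omega
    · push_neg at hk
      have h1 : phi (k-4) ≤ ∑ i ∈ Ico a (a+(k-4)+1), w i :=
        ih (k-4) (by omega) (by omega) a w hb
          (fun i hi1 hi2 => hc i hi1 (by omega))
      have h2 : phi 2 ≤ ∑ i ∈ Ico (a+k-3) (a+k-3+2+2), w i :=
        lemE 2 (a+k-3) w (fun i hi1 hi2 => by
          have := hc i (by omega) (by omega)
          exact this)
      have e1 : a + (k-4) + 1 = a + k - 3 := by omega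
      have e2 : a + k - 3 + 2 + 2 = a + k + 1 := by omega
      rw [e1] at h1; rw [e2] at h2
      have hs := Finset.sum_Ico_consecutive w (show a ≤ a+k-3 by omega)
        (show a+k-3 ≤ a+k+1 by omega)
      have hphi : phi k = phi (k-4) + phi 2 := by unfold phi; omega
      omega

lemma lemS (n : ℕ) (hn : 2 ≤ n) (w : ℕ → ℕ)
    (h0 : cond2 0 (w 0) (w 1))
    (hmid : ∀ i, 0 < i → i < n - 1 → cond2 (w (i-1)) (w i) (w (i+1)))
    (hl : cond2 (w (n-2)) (w (n-1)) 0) :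
    phi n ≤ ∑ i ∈ Ico 0 n, w i := by
  by_cases hsm : n ≤ 4
  · interval_cases n
    · have hs := sum2 w 0
      norm_num at hs hl
      rw [← Finset.range_eq_Ico, hs]
      have hp : phi 2 = 4 := by unfold phi; omega
      unfold cond2 at h0 hl; omega
    · have hs := sum3 w 0
      have h1 := hmid 1 (by omega) (by omega)
      norm_num at hs hl h1
      rw [← Finset.range_eq_Ico, hs]
      have hp : phi 3 = 4 := by unfold phi; omega
      unfold cond2 at h0 hl h1; omega
    · have hs := sum4 w 0
      have h1 := hmid 1 (by omega) (by omega)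
      have h2 := hmid 2 (by omega) (by omega)
      norm_num at hs hl h1 h2
      rw [← Finset.range_eq_Ico, hs]
      have hp : phi 4 = 4 := by unfold phi; omega
      unfold cond2 at h0 hl h1 h2; omega
  · push_neg at hsm
    by_cases hres : n % 4 = 1
    · have hpre : phi 1 ≤ ∑ i ∈ Ico 0 (0+1+1), w i :=
        lemD' 1 le_rfl 0 w h0 (fun i hi1 hi2 => absurd hi2 (by omega))
      have hb : cond2 (w (2+(n-3)-1)) (w (2+(n-3))) 0 := by
        have e1 : 2+(n-3)-1 = n-2 := by omega
        have e2 : 2+(n-3) = n-1 := by omega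
        rw [e1, e2]; exact hl
      have hsuf : phi (n-3) ≤ ∑ i ∈ Ico 2 (2+(n-3)+1), w i :=
        lemD (n-3) (by omega) 2 w
          (fun i hi1 hi2 => hmid i (by omega) (by omega)) hb
      have e1 : (0:ℕ)+1+1 = 2 := by norm_num
      have e2 : 2+(n-3)+1 = n := by omega
      rw [e1] at hpre; rw [e2] at hsuf
      have hs := Finset.sum_Ico_consecutive w (show (0:ℕ) ≤ 2 by omega) (show 2 ≤ n by omega)
      have hphi : phi n = phi 1 + phi (n-3) := by unfold phi; omega
      omega
    · have hpre : phi 2 ≤ ∑ i ∈ Ico 0 (0+2+1), w i :=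
        lemD' 2 (by omega) 0 w h0 (fun i hi1 hi2 => by
          have hi1' : i = 1 := by omega
          subst hi1'
          exact hmid 1 (by omega) (by omega))
      have hb : cond2 (w (3+(n-4)-1)) (w (3+(n-4))) 0 := by
        have e1 : 3+(n-4)-1 = n-2 := by omega
        have e2 : 3+(n-4) = n-1 := by omega
        rw [e1, e2]; exact hl
      have hsuf : phi (n-4) ≤ ∑ i ∈ Ico 3 (3+(n-4)+1), w i :=
        lemD (n-4) (by omega) 3 w
          (fun i hi1 hi2 => hmid i (by omega) (by omega)) hb
      have e1 : (0:ℕ)+2+1 = 3 := by norm_num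
      have e2 : 3+(n-4)+1 = n := by omega
      rw [e1] at hpre; rw [e2] at hsuf
      have hs := Finset.sum_Ico_consecutive w (show (0:ℕ) ≤ 3 by omega) (show 3 ≤ n by omega)
      have hphi : phi n = phi 2 + phi (n-4) := by unfold phi; omega
      omega

def pat (n i : ℕ) : Prop :=
  i % 4 = 1 ∨ i % 4 = 2 ∨ ((n % 4 = 1 ∨ n % 4 = 2) ∧ i = n - 2)

instance patDec (n i : ℕ) : Decidable (pat n i) := by unfold pat; exact inferInstance

lemma patTD (n i : ℕ) (hn : 2 ≤ n) (hi : i < n) :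
    ∃ j, j < n ∧ pat n j ∧ (j + 1 = i ∨ i + 1 = j) := by
  by_cases h1 : i % 4 = 2 ∨ i % 4 = 3
  · exact ⟨i - 1, by omega, by unfold pat; omega, by omega⟩
  · by_cases h2 : i + 1 < n
    · exact ⟨i + 1, h2, by unfold pat; omega, by omega⟩
    · exact ⟨i - 1, by omega, by unfold pat; omega, by omega⟩

lemma patSum (n : ℕ) (hn : 2 ≤ n) :
    (∑ i ∈ Finset.range n, if pat n i then (2:ℕ) else 0) = phi n := by
  classical
  have hbase : ∀ k : ℕ, (∑ i ∈ Finset.range k, if (i % 4 = 1 ∨ i % 4 = 2) then (2:ℕ) else 0)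
      = 4 * (k / 4) + 2 * (k % 4) - 2 * ((k % 4 + 3) / 4) := by
    intro k
    induction k with
    | zero => simp
    | succ k ih =>
      rw [Finset.sum_range_succ, ih]
      by_cases h : (k % 4 = 1 ∨ k % 4 = 2)
      · rw [if_pos h]; omega
      · rw [if_neg h]; omega
  have hsplit : (∑ i ∈ Finset.range n, if pat n i then (2:ℕ) else 0)
      = (∑ i ∈ Finset.range n, if (i % 4 = 1 ∨ i % 4 = 2) then (2:ℕ) else 0)
        + ∑ i ∈ Finset.range n, (if ((n % 4 = 1 ∨ n % 4 = 2) ∧ i = n - 2) then (2:ℕ) else 0) := by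
    rw [← Finset.sum_add_distrib]
    apply Finset.sum_congr rfl
    intro i hi
    by_cases hp1 : (i % 4 = 1 ∨ i % 4 = 2) <;>
      by_cases hp2 : ((n % 4 = 1 ∨ n % 4 = 2) ∧ i = n - 2)
    · exact absurd hp1 (by omega)
    · rw [if_pos (by unfold pat; tauto), if_pos hp1, if_neg hp2]
    · rw [if_pos (by unfold pat; tauto), if_neg hp1, if_pos hp2]
    · rw [if_neg (by unfold pat; tauto), if_neg hp1, if_neg hp2]
  have hextra : (∑ i ∈ Finset.range n, if ((n % 4 = 1 ∨ n % 4 = 2) ∧ i = n - 2) then (2:ℕ) else 0)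
      = if (n % 4 = 1 ∨ n % 4 = 2) then 2 else 0 := by
    by_cases hc : (n % 4 = 1 ∨ n % 4 = 2)
    · simp only [and_iff_right hc]
      rw [Finset.sum_ite_eq' (Finset.range n) (n-2) (fun _ => (2:ℕ))]
      rw [if_pos (Finset.mem_range.mpr (by omega)), if_pos hc]
    · simp [hc]
  rw [hsplit, hbase, hextra]
  by_cases hc : (n % 4 = 1 ∨ n % 4 = 2)
  · rw [if_pos hc]; unfold phi; omega
  · rw [if_neg hc]; unfold phi; omega

lemma upd_ne' {α : Sort*} {γ : Sort*} {inst : DecidableEq α} (f : α → γ) (a : α) (v : γ)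
    (x : α) (h : x ≠ a) : @Function.update α (fun _ => γ) inst f a v x = f x :=
  @Function.update_of_ne α (fun _ => γ) inst x a h v f

lemma upd_same' {α : Sort*} {γ : Sort*} {inst : DecidableEq α} (f : α → γ) (a : α) (v : γ) :
    @Function.update α (fun _ => γ) inst f a v a = v :=
  @Function.update_self α (fun _ => γ) inst a v f

lemma key {β : Type*} [Fintype β] (n : ℕ) (hn : 2 ≤ n) (H : SimpleGraph β)
    (hH : 4 ≤ domNumber H) (f : Fin n × β → ℕ)
    (hf : IsWRDF (lexProd (SimpleGraph.pathGraph n) H) f)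
    (w : ℕ → ℕ) (hw : ∀ j, w j = if h : j < n then ∑ b, f (⟨j, h⟩, b) else 0)
    (i : ℕ) (hi : i < n) :
    cond2 (if i = 0 then 0 else w (i-1)) (w i) (w (i+1)) := by
  classical
  set L := (if i = 0 then 0 else w (i-1)) + w (i+1) with hL
  have hcol_le : ∀ (j : Fin n) (c : β), f (j, c) ≤ w j.val := by
    intro j c
    rw [hw, dif_pos j.isLt]
    simp only [Fin.eta]
    exact Finset.single_le_sum (f := fun b => f (j, b)) (fun b _ => Nat.zero_le _)
      (Finset.mem_univ c)
  have hpair : ∀ (j : Fin n) (c d : β), c ≠ d → f (j, c) + f (j, d) ≤ w j.val := by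
    intro j c d hcd
    rw [hw, dif_pos j.isLt]
    simp only [Fin.eta]
    calc f (j, c) + f (j, d)
        ≤ f (j, c) + ∑ b ∈ Finset.univ.erase c, f (j, b) := by
          exact Nat.add_le_add_left (Finset.single_le_sum (f := fun b => f (j, b))
            (fun b _ => Nat.zero_le _)
            (Finset.mem_erase.mpr ⟨fun h => hcd h.symm, Finset.mem_univ d⟩)) _
      _ = ∑ b, f (j, b) := Finset.add_sum_erase Finset.univ (fun b => f (j, b)) (Finset.mem_univ c)
  have hdec : ∀ (j : Fin n), (SimpleGraph.pathGraph n).Adj j ⟨i, hi⟩ →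
      (j.val + 1 = i ∨ i + 1 = j.val) := fun j h => SimpleGraph.pathGraph_adj.mp h
  have hcolL : ∀ j, (j + 1 = i ∨ i + 1 = j) → w j ≤ L := by
    intro j hj
    rcases hj with hj | hj
    · have hi0 : i ≠ 0 := by omega
      have hj' : j = i - 1 := by omega
      rw [hL, if_neg hi0, hj']
      exact Nat.le_add_right _ _
    · rw [hL, ← hj]
      exact Nat.le_add_left _ _
  unfold cond2
  by_cases h2 : 2 ≤ L
  · exact Or.inl h2
  push_neg at h2
  set T : Finset β := Finset.univ.filter (fun b => 1 ≤ f (⟨i, hi⟩, b)) with hT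
  have hTw : T.card ≤ w i := by
    rw [hw, dif_pos hi]
    calc T.card = ∑ _b ∈ T, 1 := by simp
      _ ≤ ∑ b ∈ T, f (⟨i,hi⟩, b) := Finset.sum_le_sum (fun b hb => (Finset.mem_filter.mp hb).2)
      _ ≤ ∑ b, f (⟨i,hi⟩, b) := Finset.sum_le_sum_of_subset (Finset.subset_univ T)
  have hdom4 : ∀ D : Finset β, IsDomSet H D → 4 ≤ D.card := by
    intro D hD
    exact hH.trans (Nat.sInf_le ⟨D, hD, rfl⟩)
  by_cases hL0 : L = 0
  · right; right
    have hDom : IsDomSet H T := by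
      intro b hb
      have hfb : f (⟨i,hi⟩, b) = 0 := by
        by_contra h
        exact hb (Finset.mem_filter.mpr ⟨Finset.mem_univ _, by omega⟩)
      obtain ⟨u, hadj, hu1, -⟩ := hf.2 (⟨i,hi⟩, b) hfb
      obtain ⟨u1, u2⟩ := u
      replace hadj : (SimpleGraph.pathGraph n).Adj u1 ⟨i,hi⟩ ∨
          (u1 = ⟨i,hi⟩ ∧ H.Adj u2 b) := hadj
      rcases hadj with hp | ⟨he, hHadj⟩
      · exfalso
        have h1 := hcol_le u1 u2
        have h2 := hcolL u1.val (hdec u1 hp)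
        omega
      · subst he
        exact ⟨u2, Finset.mem_filter.mpr ⟨Finset.mem_univ _, hu1⟩, hHadj⟩
    have := hdom4 T hDom
    omega
  · -- L = 1
    have hL1 : L = 1 := by omega
    refine Or.inr (Or.inl ⟨?_, by omega⟩)
    by_contra hwi
    push_neg at hwi
    have hexjc : ∃ (j : Fin n) (c : β), (j.val + 1 = i ∨ i + 1 = j.val) ∧ 1 ≤ f (j, c) := by
      by_contra hno
      push_neg at hno
      have hz1 : (if i = 0 then 0 else w (i-1)) = 0 := by
        by_cases hi0 : i = 0
        · rw [if_pos hi0]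
        · rw [if_neg hi0, hw, dif_pos (show i - 1 < n by omega)]
          apply Finset.sum_eq_zero
          intro c _
          have := hno ⟨i-1, by omega⟩ c (by left; show i - 1 + 1 = i; omega)
          omega
      have hz2 : w (i+1) = 0 := by
        by_cases hin : i + 1 < n
        · rw [hw, dif_pos hin]
          apply Finset.sum_eq_zero
          intro c _
          have := hno ⟨i+1, hin⟩ c (Or.inr rfl)
          omega
        · rw [hw, dif_neg hin]
      omega
    obtain ⟨j, c, hjrel, hjc1⟩ := hexjc
    have hwjL : w j.val ≤ L := hcolL j.val hjrel
    have hfjc : f (j, c) = 1 := by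
      have := hcol_le j c
      omega
    have hijv : i ≠ j.val := by omega
    have hrest : ∀ (j' : Fin n) (d : β), (j'.val + 1 = i ∨ i + 1 = j'.val) →
        ((j', d) : Fin n × β) ≠ (j, c) → f (j', d) = 0 := by
      intro j' d hrel hne
      by_cases hjj : j' = j
      · subst hjj
        have hdc : c ≠ d := by
          rintro rfl
          exact hne rfl
        have := hpair j' c d hdc
        omega
      · have hvne : j'.val ≠ j.val := fun h => hjj (Fin.ext h)
        have hsum : w j'.val + w j.val ≤ L := by
          rcases hrel with ha | ha <;> rcases hjrel with hb | hb
          · omega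
          · have hi0 : i ≠ 0 := by omega
            have e1 : j'.val = i - 1 := by omega
            rw [hL, if_neg hi0, e1, ← hb]
          · have hi0 : i ≠ 0 := by omega
            have e1 : j.val = i - 1 := by omega
            rw [hL, if_neg hi0, e1, ← ha]
            omega
          · omega
        have h1 := hcol_le j' d
        have h2 := hcol_le j c
        omega
    have hb1 : ∃ b₁, b₁ ∉ T ∧ ∀ t ∈ T, ¬ H.Adj t b₁ := by
      by_contra hcon
      push_neg at hcon
      have hDom : IsDomSet H T := fun b hb => hcon b hb
      have := hdom4 T hDom
      omega
    obtain ⟨b₁, hb₁T, hb₁adj⟩ := hb1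
    have hfb₁ : f (⟨i,hi⟩, b₁) = 0 := by
      by_contra h
      exact hb₁T (Finset.mem_filter.mpr ⟨Finset.mem_univ _, by omega⟩)
    obtain ⟨u, huadj, hu1, hnou⟩ := hf.2 (⟨i,hi⟩, b₁) hfb₁
    obtain ⟨u1, u2⟩ := u
    replace huadj : (SimpleGraph.pathGraph n).Adj u1 ⟨i,hi⟩ ∨
        (u1 = ⟨i,hi⟩ ∧ H.Adj u2 b₁) := huadj
    have hu_eq : ((u1, u2) : Fin n × β) = (j, c) := by
      rcases huadj with hp | ⟨he, hHadj⟩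
      · by_contra hne
        have := hrest u1 u2 (hdec u1 hp) hne
        omega
      · exfalso
        subst he
        exact hb₁adj u2 (Finset.mem_filter.mpr ⟨Finset.mem_univ _, hu1⟩) hHadj
    rw [hu_eq] at hnou
    have hb2 : ∃ b₂, b₂ ∉ T ∧ b₂ ≠ b₁ ∧ (∀ t ∈ T, ¬ H.Adj t b₂) ∧ ¬ H.Adj b₁ b₂ := by
      by_contra hcon
      push_neg at hcon
      have hDom : IsDomSet H (insert b₁ T) := by
        intro b hb
        have hbT : b ∉ T := fun h => hb (Finset.mem_insert_of_mem h)
        have hbb₁ : b ≠ b₁ := fun h => hb (h ▸ Finset.mem_insert_self b₁ T)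
        by_cases hA : ∃ t ∈ T, H.Adj t b
        · obtain ⟨t, ht, hadj⟩ := hA
          exact ⟨t, Finset.mem_insert_of_mem ht, hadj⟩
        · push_neg at hA
          exact ⟨b₁, Finset.mem_insert_self _ _, hcon b hbT hbb₁ hA⟩
      have h4 := hdom4 _ hDom
      have hc := Finset.card_insert_le b₁ T
      omega
    obtain ⟨b₂, hb₂T, hb₂b₁, hb₂adj, hb₂nadj⟩ := hb2
    have hfb₂ : f (⟨i,hi⟩, b₂) = 0 := by
      by_contra h
      exact hb₂T (Finset.mem_filter.mpr ⟨Finset.mem_univ _, by omega⟩)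
    refine hnou ((⟨i,hi⟩, b₂) : Fin n × β) ⟨?_, ?_⟩
    · have hne_u : ((⟨i,hi⟩, b₂) : Fin n × β) ≠ (j, c) := by
        intro h
        exact hijv (congrArg (fun p : Fin n × β => p.1.val) h)
      have hne_v : ((⟨i,hi⟩, b₂) : Fin n × β) ≠ (⟨i,hi⟩, b₁) := by
        intro h
        exact hb₂b₁ (congrArg Prod.snd h)
      rw [upd_ne' _ _ _ _ hne_u, upd_ne' _ _ _ _ hne_v]
      exact hfb₂
    · intro x hxadj
      obtain ⟨x1, x2⟩ := x
      replace hxadj : (SimpleGraph.pathGraph n).Adj (⟨i,hi⟩ : Fin n) x1 ∨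
          ((⟨i,hi⟩ : Fin n) = x1 ∧ H.Adj b₂ x2) := hxadj
      rcases hxadj with hp | ⟨he, hH2⟩
      · have hrel : x1.val + 1 = i ∨ i + 1 = x1.val := hdec x1 hp.symm
        by_cases hxu : ((x1, x2) : Fin n × β) = (j, c)
        · rw [hxu, upd_same' _ _ _]
          omega
        · have hxv : ((x1, x2) : Fin n × β) ≠ (⟨i,hi⟩, b₁) := by
            intro h
            have : x1.val = i := congrArg (fun p : Fin n × β => p.1.val) h
            omega
          rw [upd_ne' _ _ _ _ hxu, upd_ne' _ _ _ _ hxv]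
          exact hrest x1 x2 hrel hxu
      · have hx1 : x1 = ⟨i, hi⟩ := he.symm
        subst hx1
        have hxu : ((⟨i,hi⟩, x2) : Fin n × β) ≠ (j, c) := by
          intro h
          exact hijv (congrArg (fun p : Fin n × β => p.1.val) h)
        have hxv : ((⟨i,hi⟩, x2) : Fin n × β) ≠ (⟨i,hi⟩, b₁) := by
          intro h
          have hx2 : x2 = b₁ := congrArg Prod.snd h
          subst hx2
          exact hb₂nadj hH2.symm
        rw [upd_ne' _ _ _ _ hxu, upd_ne' _ _ _ _ hxv]
        by_contra h
        exact hb₂adj x2 (Finset.mem_filter.mpr ⟨Finset.mem_univ _, by omega⟩) hH2.symm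

noncomputable def upF {β : Type*} (n : ℕ) (b0 : β) : Fin n × β → ℕ :=
  fun p => if pat n p.1.val ∧ p.2 = b0 then 2 else 0

lemma upF_eq_two {β : Type*} (n : ℕ) (b0 : β) (j : Fin n) (h : pat n j.val) :
    upF n b0 (j, b0) = 2 := by
  simp [upF, h]


/-- For any `n ≥ 2` and any graph `H` with `γ(H) ≥ 4`,
`γ_r(P_n∘H)` equals `n` if `n ≡ 0 (mod 4)`, `n+2` if `n ≡ 2 (mod 4)`,
and `n+1` otherwise. -/
theorem weakRoman_lexProd_path {β : Type*} [Fintype β]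
    (n : ℕ) (hn : 2 ≤ n) (H : SimpleGraph β) (hH : 4 ≤ domNumber H) :
    (n % 4 = 0 → weakRomanNumber (lexProd (SimpleGraph.pathGraph n) H) = n) ∧
    (n % 4 = 2 → weakRomanNumber (lexProd (SimpleGraph.pathGraph n) H) = n + 2) ∧
    (n % 4 ≠ 0 → n % 4 ≠ 2 →
      weakRomanNumber (lexProd (SimpleGraph.pathGraph n) H) = n + 1) := by
  classical
  have hmain : weakRomanNumber (lexProd (SimpleGraph.pathGraph n) H) = phi n := by
    -- β is nonempty
    have hne : Nonempty β := by
      by_contra hemp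
      rw [not_nonempty_iff] at hemp
      have h0 : domNumber H ≤ 0 := Nat.sInf_le ⟨(∅ : Finset β),
        fun v _ => (hemp.false v).elim, rfl⟩
      omega
    obtain ⟨b0⟩ := hne
    have hFwrdf : IsWRDF (lexProd (SimpleGraph.pathGraph n) H) (upF n b0) := by
      constructor
      · intro v
        simp only [upF]
        by_cases h : pat n v.1.val ∧ v.2 = b0
        · rw [if_pos h]
        · rw [if_neg h]
          omega
      · intro v hv
        obtain ⟨j, hjn, hpj, hrel⟩ := patTD n v.1.val hn v.1.isLt
        have hFj : upF n b0 ((⟨j, hjn⟩ : Fin n), b0) = 2 := upF_eq_two n b0 ⟨j, hjn⟩ hpj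
        refine ⟨((⟨j, hjn⟩ : Fin n), b0), Or.inl (SimpleGraph.pathGraph_adj.mpr hrel), ?_, ?_⟩
        · rw [hFj]
          omega
        · intro x hx
          obtain ⟨j', hjn', hpj', hrel'⟩ := patTD n x.1.val hn x.1.isLt
          have hFj' : upF n b0 ((⟨j', hjn'⟩ : Fin n), b0) = 2 := upF_eq_two n b0 ⟨j', hjn'⟩ hpj'
          have hadjx : (lexProd (SimpleGraph.pathGraph n) H).Adj x ((⟨j', hjn'⟩ : Fin n), b0) :=
            Or.inl (SimpleGraph.pathGraph_adj.mpr (Or.symm hrel'))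
          have hzero := hx.2 ((⟨j', hjn'⟩ : Fin n), b0) hadjx
          by_cases h1 : (((⟨j', hjn'⟩ : Fin n), b0) : Fin n × β) = ((⟨j, hjn⟩ : Fin n), b0)
          · rw [h1, upd_same' _ _ _] at hzero
            rw [hFj] at hzero
            omega
          · rw [upd_ne' _ _ _ _ h1] at hzero
            by_cases h2 : (((⟨j', hjn'⟩ : Fin n), b0) : Fin n × β) = v
            · rw [h2, upd_same' _ _ _] at hzero
              omega
            · rw [upd_ne' _ _ _ _ h2] at hzero
              rw [hFj'] at hzero
              omega
    have hFsum : ∑ v, upF n b0 v = phi n := by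
      simp only [upF]
      rw [Fintype.sum_prod_type]
      have h1 : ∀ i : Fin n, (∑ b : β, if pat n (i : ℕ) ∧ b = b0 then (2:ℕ) else 0)
          = if pat n (i : ℕ) then 2 else 0 := by
        intro i
        by_cases hp : pat n (i : ℕ)
        · rw [if_pos hp]
          have he : ∀ b : β, (pat n (i : ℕ) ∧ b = b0) = (b = b0) := fun b => by
            simp [hp]
          simp only [he]
          rw [Finset.sum_ite_eq' Finset.univ b0 (fun _ => (2:ℕ)), if_pos (Finset.mem_univ b0)]
        · rw [if_neg hp]
          simp [hp]
      rw [Finset.sum_congr rfl (fun i _ => h1 i)]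
      rw [Fin.sum_univ_eq_sum_range (fun i => if pat n i then (2:ℕ) else 0) n]
      exact patSum n hn
    have hub : weakRomanNumber (lexProd (SimpleGraph.pathGraph n) H) ≤ phi n :=
      Nat.sInf_le ⟨upF n b0, hFwrdf, hFsum⟩
    have hlb : phi n ≤ weakRomanNumber (lexProd (SimpleGraph.pathGraph n) H) := by
      unfold weakRomanNumber
      apply le_csInf
      · exact ⟨phi n, upF n b0, hFwrdf, hFsum⟩
      · rintro k ⟨f, hf, rfl⟩
        set w : ℕ → ℕ := fun j => if h : j < n then ∑ b, f (⟨j, h⟩, b) else 0 with hwdef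
        have hkey := fun (i : ℕ) (hi : i < n) =>
          key n hn H hH f hf w (fun j => rfl) i hi
        have hsum_eq : ∑ v, f v = ∑ i ∈ Finset.Ico 0 n, w i := by
          rw [← Finset.range_eq_Ico, Fintype.sum_prod_type]
          rw [← Fin.sum_univ_eq_sum_range (fun i => w i) n]
          apply Finset.sum_congr rfl
          intro i _
          rw [hwdef]
          simp only
          rw [dif_pos i.isLt]
        rw [hsum_eq]
        apply lemS n hn w
        · have := hkey 0 (by omega)
          rw [if_pos rfl] at this
          exact this
        · intro i h1 h2
          have := hkey i (by omega)
          rw [if_neg (by omega)] at this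
          exact this
        · have := hkey (n-1) (by omega)
          rw [if_neg (by omega)] at this
          have e1 : n - 1 - 1 = n - 2 := by omega
          have e2 : n - 1 + 1 = n := by omega
          rw [e1, e2] at this
          have hwn : w n = 0 := by
            rw [hwdef]
            simp only
            rw [dif_neg (lt_irrefl n)]
          rw [hwn] at this
          exact this
    omega
  refine ⟨fun h => ?_, fun h => ?_, fun h1 h2 => ?_⟩ <;> rw [hmain] <;> unfold phi <;> omega
end
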